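/- arXiv:2004.02209 — 7 statements merged into one kernel-verified Lean document; each statement's English description precedes it below -/
import Mathlib

section
/- (The more fire, the bigger the blaze.) Let (S_x, I_x) and (S_y, I_y) be SIR trajectories without intervention, with the same parameters β and γ, defined on [t_x, ∞) and [t_y, ∞) respectively. If 0 ≤ I_x(t_x) ≤ I_y(t_y) and S_x(t_x) = S_y(t_y), then Imax_x(t_x) ≤ Imax_y(t_y), with equality only if I_x(t_x) = I_y(t_y). -/
noncomputable section

/-- SIR parameters: β > γ > 0. -/
structure SIRParams where
  β : ℝ
  γ : ℝ
  hγ : 0 < γ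
  hβγ : γ < β

/-- Basic reproduction number R0 = β/γ. -/
def SIRParams.R0 (p : SIRParams) : ℝ := p.β / p.γ

/-- Critical susceptible fraction Scrit = γ/β = 1/R0. -/
def SIRParams.Scrit (p : SIRParams) : ℝ := p.γ / p.β

/-- An intervention with start time `ti` and duration `τ`: a right-continuous
function `b : ℝ → [0,1]` with finitely many discontinuity points such that
`b t = 1` for all `t ∉ [ti, ti + τ]`. -/
structure Intervention (p : SIRParams) where
  b : ℝ → ℝ
  ti : ℝ
  τ : ℝ
  hτ : 0 < τ
  mem_Icc : ∀ t, b t ∈ Set.Icc (0 : ℝ) 1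
  rightCont : ∀ t, ContinuousWithinAt b (Set.Ici t) t
  finiteDisc : {t : ℝ | ¬ ContinuousAt b t}.Finite
  outside : ∀ t, t ∉ Set.Icc ti (ti + τ) → b t = 1

/-- The null intervention b ≡ 1. -/
def nullB : ℝ → ℝ := fun _ => 1

/-- An SIR trajectory under transmission-reduction function `b` on a set `J ⊆ ℝ`
(an interval unbounded above, encoded as being upward closed): a pair of
continuous functions `S, I : ℝ → ℝ` with `0 < S ≤ 1`, `0 ≤ I`, `S + I ≤ 1` on `J`,
satisfying the integral form of the SIR equations. -/
structure IsSIRTrajectory (p : SIRParams) (b : ℝ → ℝ) (J : Set ℝ) (S I : ℝ → ℝ) : Prop where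
  upClosed : ∀ t ∈ J, ∀ s, t ≤ s → s ∈ J
  contS : ContinuousOn S J
  contI : ContinuousOn I J
  Spos : ∀ t ∈ J, 0 < S t
  Sle_one : ∀ t ∈ J, S t ≤ 1
  Inonneg : ∀ t ∈ J, 0 ≤ I t
  sum_le_one : ∀ t ∈ J, S t + I t ≤ 1
  S_eq : ∀ t0 ∈ J, ∀ t ∈ J, t0 ≤ t →
    S t = S t0 - ∫ s in t0..t, b s * p.β * S s * I s
  I_eq : ∀ t0 ∈ J, ∀ t ∈ J, t0 ≤ t →
    I t = I t0 + ∫ s in t0..t, (b s * p.β * S s * I s - p.γ * I s)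

/-- `ImaxAt J I t = sup_{x ≥ t, x ∈ J} I x`. -/
def ImaxAt (J : Set ℝ) (I : ℝ → ℝ) (t : ℝ) : ℝ := sSup (I '' (J ∩ Set.Ici t))

/-- Reference emerging-epidemic trajectory: an SIR trajectory without
intervention on ℝ with I₁ > 0 everywhere, S₁ → 1 and I₁ → 0 as t → −∞. -/
def IsReference (p : SIRParams) (S1 I1 : ℝ → ℝ) : Prop :=
  IsSIRTrajectory p nullB Set.univ S1 I1 ∧
  (∀ t, 0 < I1 t) ∧
  Filter.Tendsto S1 Filter.atBot (nhds 1) ∧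
  Filter.Tendsto I1 Filter.atBot (nhds 0)

/-- The controlled trajectory of intervention `bi`: the SIR trajectory under
`bi.b` on ℝ coinciding with the reference trajectory `(S1, I1)` on `(−∞, bi.ti]`. -/
def IsControlled (p : SIRParams) (S1 I1 : ℝ → ℝ) (bi : Intervention p)
    (S I : ℝ → ℝ) : Prop :=
  IsSIRTrajectory p bi.b Set.univ S I ∧ ∀ t ≤ bi.ti, S t = S1 t ∧ I t = I1 t

/-- Global peak prevalence of a controlled trajectory: `Imax = sup_{t ∈ ℝ} I t`. -/
def Imax (I : ℝ → ℝ) : ℝ := sSup (Set.range I)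

/-- An intervention `bs` (with controlled trajectory `(Sb, Ib)`) is optimal for
its duration if its peak prevalence is at most that of any intervention of the
same duration (with any start time). -/
def IsOptimal (p : SIRParams) (S1 I1 : ℝ → ℝ) (bs : Intervention p)
    (Sb Ib : ℝ → ℝ) : Prop :=
  IsControlled p S1 I1 bs Sb Ib ∧
  ∀ (b : Intervention p), b.τ = bs.τ →
    ∀ S I : ℝ → ℝ, IsControlled p S1 I1 b S I → Imax Ib ≤ Imax I

/-- A maintain–suppress intervention with maintenance fraction `f ∈ [0,1]`:
`b t = γ/(β·S t)` on `[ti, ti + f·τ)` and `b t = 0` on `[ti + f·τ, ti + τ]`,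
where `S` is the controlled trajectory's susceptible fraction. -/
def IsMaintainSuppress (p : SIRParams) (bi : Intervention p) (f : ℝ)
    (S : ℝ → ℝ) : Prop :=
  f ∈ Set.Icc (0 : ℝ) 1 ∧
  (∀ t ∈ Set.Ico bi.ti (bi.ti + f * bi.τ), bi.b t = p.γ / (p.β * S t)) ∧
  (∀ t ∈ Set.Icc (bi.ti + f * bi.τ) (bi.ti + bi.τ), bi.b t = 0)

/-- A full suppression intervention: `b t = 0` throughout `[ti, ti + τ]`. -/
def IsFullSuppression (p : SIRParams) (bi : Intervention p) : Prop :=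
  ∀ t ∈ Set.Icc bi.ti (bi.ti + bi.τ), bi.b t = 0

/-- A fixed control intervention with strictness `σ ∈ [0,1]`: `b t = σ`
throughout `[ti, ti + τ]`. -/
def IsFixedControl (p : SIRParams) (bi : Intervention p) (σ : ℝ) : Prop :=
  σ ∈ Set.Icc (0 : ℝ) 1 ∧ ∀ t ∈ Set.Icc bi.ti (bi.ti + bi.τ), bi.b t = σ

open Set intervalIntegral

section aux

variable {p : SIRParams} {t0 : ℝ} {S I : ℝ → ℝ}
  (hT : IsSIRTrajectory p nullB (Set.Ici t0) S I)

/-- FTC helper. -/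
lemma ftc_aux {f : ℝ → ℝ} (hf : ContinuousOn f (Set.Ici t0)) :
    ∀ t ∈ Set.Ici t0, HasDerivWithinAt (fun u => ∫ x in t0..u, f x) (f t) (Set.Ici t0) t := by
  intro t ht
  have hint : IntervalIntegrable f MeasureTheory.volume t0 t := by
    apply (hf.mono ?_).intervalIntegrable
    rw [Set.uIcc_of_le (ht : t0 ≤ t)]
    exact Set.Icc_subset_Ici_self
  rcases eq_or_lt_of_le (show t0 ≤ t from ht) with rfl | hlt
  · exact integral_hasDerivWithinAt_right hint
      ((hf.mono Set.Ioi_subset_Ici_self).stronglyMeasurableAtFilter_nhdsWithin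
        measurableSet_Ioi t0)
      ((hf t0 Set.self_mem_Ici).mono Set.Ioi_subset_Ici_self)
  · have hmeas : StronglyMeasurableAtFilter f (nhds t) :=
      ContinuousOn.stronglyMeasurableAtFilter isOpen_Ioi (hf.mono Set.Ioi_subset_Ici_self) t hlt
    have hca : ContinuousAt f t :=
      (hf t (show t0 ≤ t from le_of_lt hlt)).continuousAt (Ici_mem_nhds hlt)
    exact (integral_hasDerivAt_right hint hmeas hca).hasDerivWithinAt

include hT

lemma contfS : ContinuousOn (fun s => nullB s * p.β * S s * I s) (Set.Ici t0) := by
  simp only [nullB, one_mul]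
  exact (continuousOn_const.mul hT.contS).mul hT.contI

lemma contfI : ContinuousOn (fun s => nullB s * p.β * S s * I s - p.γ * I s) (Set.Ici t0) :=
  (contfS hT).sub (continuousOn_const.mul hT.contI)

lemma hSd : ∀ t ∈ Set.Ici t0, HasDerivWithinAt S (-(p.β * S t * I t)) (Set.Ici t0) t := by
  intro t ht
  have h := ((ftc_aux (contfS hT) t ht).const_sub (S t0))
  refine (h.congr (fun x hx => hT.S_eq t0 Set.self_mem_Ici x hx hx)
    (hT.S_eq t0 Set.self_mem_Ici t ht ht)).congr_deriv ?_
  simp [nullB]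

lemma hId : ∀ t ∈ Set.Ici t0, HasDerivWithinAt I ((p.β * S t - p.γ) * I t) (Set.Ici t0) t := by
  intro t ht
  have h := ((ftc_aux (contfI hT) t ht).const_add (I t0))
  refine (h.congr (fun x hx => hT.I_eq t0 Set.self_mem_Ici x hx hx)
    (hT.I_eq t0 Set.self_mem_Ici t ht ht)).congr_deriv ?_
  simp [nullB]
  ring

lemma hSd_at : ∀ t ∈ Set.Ioi t0, HasDerivAt S (-(p.β * S t * I t)) t := fun t ht =>
  (hSd hT t (show t0 ≤ t from le_of_lt ht)).hasDerivAt (Ici_mem_nhds ht)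

lemma hId_at : ∀ t ∈ Set.Ioi t0, HasDerivAt I ((p.β * S t - p.γ) * I t) t := fun t ht =>
  (hId hT t (show t0 ≤ t from le_of_lt ht)).hasDerivAt (Ici_mem_nhds ht)

end aux

section aux2

variable {p : SIRParams} {t0 : ℝ} {S I : ℝ → ℝ}

lemma mono_aux {f g : ℝ → ℝ} (hf : ContinuousOn f (Set.Ici t0))
    (hd : ∀ t ∈ Set.Ioi t0, HasDerivAt f (g t) t)
    (h0 : ∀ t ∈ Set.Ioi t0, 0 ≤ g t) : MonotoneOn f (Set.Ici t0) := by
  apply monotoneOn_of_deriv_nonneg (convex_Ici t0) hf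
  · intro x hx
    rw [interior_Ici] at hx
    exact ((hd x hx).differentiableAt).differentiableWithinAt
  · intro x hx
    rw [interior_Ici] at hx
    rw [(hd x hx).deriv]
    exact h0 x hx

lemma anti_aux {f g : ℝ → ℝ} (hf : ContinuousOn f (Set.Ici t0))
    (hd : ∀ t ∈ Set.Ioi t0, HasDerivAt f (g t) t)
    (h0 : ∀ t ∈ Set.Ioi t0, g t ≤ 0) : AntitoneOn f (Set.Ici t0) := by
  apply antitoneOn_of_deriv_nonpos (convex_Ici t0) hf
  · intro x hx
    rw [interior_Ici] at hx
    exact ((hd x hx).differentiableAt).differentiableWithinAt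
  · intro x hx
    rw [interior_Ici] at hx
    rw [(hd x hx).deriv]
    exact h0 x hx

variable (hT : IsSIRTrajectory p nullB (Set.Ici t0) S I)
include hT

lemma hVd : ∀ t ∈ Set.Ioi t0,
    HasDerivAt (fun t => I t + S t - p.Scrit * Real.log (S t)) 0 t := by
  intro t ht
  have hS0 : S t ≠ 0 := ne_of_gt (hT.Spos t (show t0 ≤ t from le_of_lt ht))
  have hlog : HasDerivAt (fun t => Real.log (S t)) ((S t)⁻¹ * -(p.β * S t * I t)) t :=
    (Real.hasDerivAt_log hS0).comp t (hSd_at hT t ht)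
  have h := ((hId_at hT t ht).add (hSd_at hT t ht)).sub (hlog.const_mul p.Scrit)
  refine h.congr_deriv ?_
  unfold SIRParams.Scrit
  have hβ : p.β ≠ 0 := ne_of_gt (lt_trans p.hγ p.hβγ)
  field_simp
  ring

lemma contV : ContinuousOn (fun t => I t + S t - p.Scrit * Real.log (S t)) (Set.Ici t0) :=
  (hT.contI.add hT.contS).sub (continuousOn_const.mul
    (hT.contS.log (fun x hx => ne_of_gt (hT.Spos x hx))))

lemma V_eq : ∀ t ∈ Set.Ici t0,
    I t + S t - p.Scrit * Real.log (S t) = I t0 + S t0 - p.Scrit * Real.log (S t0) := by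
  intro t ht
  have hm := mono_aux (contV hT) (hVd hT) (fun _ _ => le_rfl)
  have ha := anti_aux (contV hT) (hVd hT) (fun _ _ => le_rfl)
  exact le_antisymm (ha Set.self_mem_Ici ht ht) (hm Set.self_mem_Ici ht ht)

lemma I_pos (h0 : 0 < I t0) : ∀ t ∈ Set.Ici t0, 0 < I t := by
  intro t ht
  have hd : ∀ x ∈ Set.Ioi t0, HasDerivAt (fun t => I t * Real.exp (p.γ * t))
      ((p.β * S x - p.γ) * I x * Real.exp (p.γ * x) + I x * (Real.exp (p.γ * x) * p.γ)) x := by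
    intro x hx
    have he : HasDerivAt (fun t => Real.exp (p.γ * t)) (Real.exp (p.γ * x) * p.γ) x := by
      have h1 : HasDerivAt (fun t : ℝ => p.γ * t) (p.γ * 1) x := (hasDerivAt_id x).const_mul p.γ
      simpa [Function.comp_def] using (Real.hasDerivAt_exp (p.γ * x)).comp x h1
    exact (hId_at hT x hx).mul he
  have hmono : MonotoneOn (fun t => I t * Real.exp (p.γ * t)) (Set.Ici t0) := by
    apply mono_aux (hT.contI.mul (Real.continuous_exp.comp (continuous_const.mul continuous_id)).continuousOn) hd
    intro x hx
    have : (p.β * S x - p.γ) * I x * Real.exp (p.γ * x) + I x * (Real.exp (p.γ * x) * p.γ)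
        = p.β * S x * I x * Real.exp (p.γ * x) := by ring
    rw [this]
    have hβ : 0 < p.β := lt_trans p.hγ p.hβγ
    have := hT.Spos x (show t0 ≤ x from le_of_lt hx)
    have := hT.Inonneg x (show t0 ≤ x from le_of_lt hx)
    have := Real.exp_pos (p.γ * x)
    positivity
  have hle := hmono Set.self_mem_Ici ht ht
  have h1 : 0 < I t0 * Real.exp (p.γ * t0) := mul_pos h0 (Real.exp_pos _)
  have h2 : 0 < I t * Real.exp (p.γ * t) := lt_of_lt_of_le h1 hle
  nlinarith [Real.exp_pos (p.γ * t)]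

lemma I_zero (h0 : I t0 = 0) : ∀ t ∈ Set.Ici t0, I t = 0 := by
  intro t ht
  have hβ : 0 < p.β := lt_trans p.hγ p.hβγ
  have key := norm_le_gronwallBound_of_norm_deriv_right_le
    (f := I) (f' := fun x => (p.β * S x - p.γ) * I x) (δ := 0) (K := p.β + p.γ) (ε := 0)
    (a := t0) (b := t) (hT.contI.mono Set.Icc_subset_Ici_self)
    (fun x hx => (hId hT x hx.1).mono (Set.Ici_subset_Ici.mpr hx.1))
    (by rw [h0]; simp)
    (fun x hx => by
      rw [Real.norm_eq_abs, Real.norm_eq_abs, abs_mul, add_zero]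
      have h1 : |p.β * S x - p.γ| ≤ p.β + p.γ := by
        rw [abs_le]
        have hs1 := hT.Sle_one x hx.1
        have hs0 := (hT.Spos x hx.1).le
        constructor <;> nlinarith [p.hγ.le]
      exact mul_le_mul_of_nonneg_right h1 (abs_nonneg _))
    t ⟨ht, le_rfl⟩
  rw [gronwallBound_ε0] at key
  have hkey : ‖I t‖ ≤ 0 := by simpa using key
  simpa using norm_le_zero_iff.mp hkey

lemma S_anti : AntitoneOn S (Set.Ici t0) := by
  apply anti_aux hT.contS (hSd_at hT)
  intro x hx
  have hβ : 0 < p.β := lt_trans p.hγ p.hβγ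
  have := hT.Spos x (show t0 ≤ x from le_of_lt hx)
  have := hT.Inonneg x (show t0 ≤ x from le_of_lt hx)
  have : 0 ≤ p.β * S x * I x := by positivity
  linarith

lemma bddI : BddAbove (I '' (Set.Ici t0 ∩ Set.Ici t0)) := by
  refine ⟨1, ?_⟩
  rintro y ⟨x, ⟨hx, -⟩, rfl⟩
  have := hT.sum_le_one x hx
  have := hT.Spos x hx
  linarith

lemma peak_low (hs : S t0 ≤ p.Scrit) : ImaxAt (Set.Ici t0) I t0 = I t0 := by
  have hβ : 0 < p.β := lt_trans p.hγ p.hβγ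
  have hanti : AntitoneOn I (Set.Ici t0) := by
    apply anti_aux hT.contI (hId_at hT)
    intro x hx
    have h1 : S x ≤ p.Scrit := le_trans (S_anti hT Set.self_mem_Ici (show t0 ≤ x from le_of_lt hx) (show t0 ≤ x from le_of_lt hx)) hs
    have h2 : p.β * S x - p.γ ≤ 0 := by
      have := mul_le_mul_of_nonneg_left h1 hβ.le
      rw [SIRParams.Scrit] at this
      rw [mul_div_cancel₀ _ (ne_of_gt hβ)] at this
      linarith
    exact mul_nonpos_of_nonpos_of_nonneg h2 (hT.Inonneg x (show t0 ≤ x from le_of_lt hx))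
  unfold ImaxAt
  rw [Set.inter_self]
  apply le_antisymm
  · refine csSup_le ?_ ?_
    · exact ⟨I t0, t0, Set.self_mem_Ici, rfl⟩
    · rintro y ⟨x, hx, rfl⟩
      exact hanti Set.self_mem_Ici hx hx
  · exact le_csSup (by rw [← Set.inter_self (Set.Ici t0)]; exact bddI hT)
      ⟨t0, Set.self_mem_Ici, rfl⟩

lemma exists_S_lt (h0 : 0 < I t0) (hs : p.Scrit < S t0) :
    ∃ t1 ∈ Set.Ici t0, S t1 < p.Scrit := by
  by_contra hcon
  push_neg at hcon
  have hβ : 0 < p.β := lt_trans p.hγ p.hβγ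
  have hc : 0 < p.Scrit := div_pos p.hγ hβ
  have hβc : p.β * p.Scrit = p.γ := by
    rw [SIRParams.Scrit, mul_div_cancel₀ _ (ne_of_gt hβ)]
  have hImono : MonotoneOn I (Set.Ici t0) := by
    apply mono_aux hT.contI (hId_at hT)
    intro x hx
    have h1 := hcon x (show t0 ≤ x from le_of_lt hx)
    have h2 : p.γ ≤ p.β * S x := by
      rw [← hβc]; exact mul_le_mul_of_nonneg_left h1 hβ.le
    exact mul_nonneg (by linarith) (hT.Inonneg x (show t0 ≤ x from le_of_lt hx))
  set K := p.β * p.Scrit * I t0 with hKdef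
  have hK : 0 < K := by positivity
  have hanti2 : AntitoneOn (fun t => S t + K * t) (Set.Ici t0) := by
    apply anti_aux (hT.contS.add (continuous_const.mul continuous_id).continuousOn)
      (g := fun x => -(p.β * S x * I x) + K * 1)
    · intro x hx
      exact (hSd_at hT x hx).add ((hasDerivAt_id x).const_mul K)
    · intro x hx
      have h1 := hcon x (show t0 ≤ x from le_of_lt hx)
      have h2 := hImono Set.self_mem_Ici (show t0 ≤ x from le_of_lt hx) (show t0 ≤ x from le_of_lt hx)
      have h3 : K ≤ p.β * S x * I x := by
        rw [hKdef]
        have h4 := hT.Inonneg x (show t0 ≤ x from le_of_lt hx)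
        have h5 : p.β * p.Scrit * I t0 ≤ p.β * p.Scrit * I x :=
          mul_le_mul_of_nonneg_left h2 (mul_pos hβ hc).le
        have h6 : p.β * p.Scrit * I x ≤ p.β * S x * I x := by
          have := mul_nonneg (mul_nonneg hβ.le h4) (sub_nonneg.mpr h1)
          nlinarith
        linarith
      linarith
  set t2 := t0 + (S t0 + 1) / K with ht2def
  have hS00 : 0 < S t0 := hT.Spos t0 Set.self_mem_Ici
  have ht2 : t0 ≤ t2 := by
    rw [ht2def]
    have : 0 < (S t0 + 1) / K := by positivity
    linarith
  have hA := hanti2 Set.self_mem_Ici ht2 ht2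
  simp only at hA
  have hKt : K * t2 = K * t0 + (S t0 + 1) := by
    rw [ht2def]
    field_simp
  have := hT.Spos t2 ht2
  linarith [hA, hKt]

lemma peak_high (h0 : 0 < I t0) (hs : p.Scrit < S t0) :
    ImaxAt (Set.Ici t0) I t0
      = I t0 + (S t0 - p.Scrit + p.Scrit * Real.log (p.Scrit / S t0)) := by
  have hβ : 0 < p.β := lt_trans p.hγ p.hβγ
  have hc : 0 < p.Scrit := div_pos p.hγ hβ
  have hS00 : 0 < S t0 := hT.Spos t0 Set.self_mem_Ici
  have hlogd : Real.log (p.Scrit / S t0) = Real.log p.Scrit - Real.log (S t0) :=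
    Real.log_div (ne_of_gt hc) (ne_of_gt hS00)
  have upper : ∀ x ∈ Set.Ici t0,
      I x ≤ I t0 + (S t0 - p.Scrit + p.Scrit * Real.log (p.Scrit / S t0)) := by
    intro x hx
    have hV := V_eq hT x hx
    have hSx := hT.Spos x hx
    have key : p.Scrit * Real.log (S x / p.Scrit) ≤ S x - p.Scrit := by
      have hl := Real.log_le_sub_one_of_pos (div_pos hSx hc)
      have := mul_le_mul_of_nonneg_left hl hc.le
      calc p.Scrit * Real.log (S x / p.Scrit) ≤ p.Scrit * (S x / p.Scrit - 1) := this
        _ = S x - p.Scrit := by field_simp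
    rw [Real.log_div (ne_of_gt hSx) (ne_of_gt hc)] at key
    rw [hlogd]
    linarith
  obtain ⟨t1, ht1, hSt1⟩ := exists_S_lt hT h0 hs
  have hmem : p.Scrit ∈ Set.Icc (S t1) (S t0) := ⟨le_of_lt hSt1, le_of_lt hs⟩
  obtain ⟨x, hx, hSx⟩ := intermediate_value_Icc' (ht1 : t0 ≤ t1)
    (hT.contS.mono Set.Icc_subset_Ici_self) hmem
  have hxIci : x ∈ Set.Ici t0 := hx.1
  have hIx : I x = I t0 + (S t0 - p.Scrit + p.Scrit * Real.log (p.Scrit / S t0)) := by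
    have hV := V_eq hT x hxIci
    rw [hSx] at hV
    rw [hlogd]
    linarith
  unfold ImaxAt
  rw [Set.inter_self]
  apply le_antisymm
  · refine csSup_le ?_ ?_
    · exact ⟨I t0, t0, Set.self_mem_Ici, rfl⟩
    · rintro y ⟨z, hz, rfl⟩
      exact upper z hz
  · exact le_csSup (by rw [← Set.inter_self (Set.Ici t0)]; exact bddI hT)
      ⟨x, hxIci, hIx⟩

end aux2

def excess (p : SIRParams) (s0 : ℝ) : ℝ :=
  if p.Scrit < s0 then s0 - p.Scrit + p.Scrit * Real.log (p.Scrit / s0) else 0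

lemma peak_formula {p : SIRParams} {t0 : ℝ} {S I : ℝ → ℝ}
    (hT : IsSIRTrajectory p nullB (Set.Ici t0) S I) (h0 : 0 < I t0) :
    ImaxAt (Set.Ici t0) I t0 = I t0 + excess p (S t0) := by
  unfold excess
  by_cases hs : p.Scrit < S t0
  · rw [if_pos hs]
    exact peak_high hT h0 hs
  · rw [if_neg hs, add_zero]
    exact peak_low hT (not_lt.mp hs)


/-- The more fire, the bigger the blaze: starting from equal
susceptible fractions, a larger infectious fraction yields a larger peak. -/
theorem more_fire_bigger_blaze (p : SIRParams) (tx ty : ℝ)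
    (Sx Ix Sy Iy : ℝ → ℝ)
    (hx : IsSIRTrajectory p nullB (Set.Ici tx) Sx Ix)
    (hy : IsSIRTrajectory p nullB (Set.Ici ty) Sy Iy)
    (hI0 : 0 ≤ Ix tx) (hIle : Ix tx ≤ Iy ty) (hSeq : Sx tx = Sy ty) :
    ImaxAt (Set.Ici tx) Ix tx ≤ ImaxAt (Set.Ici ty) Iy ty ∧
    (ImaxAt (Set.Ici tx) Ix tx = ImaxAt (Set.Ici ty) Iy ty → Ix tx = Iy ty) := by
  have hB_ge : Iy ty ≤ ImaxAt (Set.Ici ty) Iy ty :=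
    le_csSup (bddI hy) ⟨ty, ⟨Set.self_mem_Ici, Set.self_mem_Ici⟩, rfl⟩
  rcases eq_or_lt_of_le hI0 with h0 | h0
  · have hXzero : ImaxAt (Set.Ici tx) Ix tx = 0 := by
      unfold ImaxAt
      rw [Set.inter_self]
      have himg : Ix '' Set.Ici tx = {0} := by
        ext y
        constructor
        · rintro ⟨z, hz, rfl⟩
          exact I_zero hx h0.symm z hz
        · rintro rfl
          exact ⟨tx, Set.self_mem_Ici, I_zero hx h0.symm tx Set.self_mem_Ici⟩
      rw [himg, csSup_singleton]
    constructor
    · rw [hXzero]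
      exact le_trans (hy.Inonneg ty Set.self_mem_Ici) hB_ge
    · intro hEq
      rw [hXzero] at hEq
      have h1 : Iy ty ≤ 0 := hEq ▸ hB_ge
      have h2 := hy.Inonneg ty Set.self_mem_Ici
      linarith
  · have h0y : 0 < Iy ty := lt_of_lt_of_le h0 hIle
    have hAx := peak_formula hx h0
    have hAy := peak_formula hy h0y
    rw [hAx, hAy, hSeq]
    constructor
    · linarith
    · intro h
      linarith
end
end

section
/- (The more fuel, the bigger the blaze.) Let (S_x, I_x) and (S_y, I_y) be SIR trajectories without intervention, with the same parameters β and γ, defined on [t_x, ∞) and [t_y, ∞) respectively. If I_x(t_x) = I_y(t_y) > 0 and S_x(t_x) ≤ S_y(t_y), then Imax_x(t_x) ≤ Imax_y(t_y), with equality only if S_x(t_x) = S_y(t_y) or S_y(t_y) ≤ Scrit. -/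
noncomputable section

/-! ### Auxiliary lemmas for `more_fuel_bigger_blaze` -/

namespace MoreFuelAux

open Set intervalIntegral

/-- The potential function `φ(s) = Scrit * log s - s`. -/
def phi (p : SIRParams) (s : ℝ) : ℝ := p.Scrit * Real.log s - s

lemma beta_pos (p : SIRParams) : 0 < p.β := p.hγ.trans p.hβγ

lemma Scrit_pos (p : SIRParams) : 0 < p.Scrit := div_pos p.hγ (beta_pos p)

lemma Scrit_mul_beta (p : SIRParams) : p.Scrit * p.β = p.γ :=
  div_mul_cancel₀ _ (beta_pos p).ne'

/-- φ is maximized at Scrit. -/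
lemma phi_le (p : SIRParams) {s : ℝ} (hs : 0 < s) : phi p s ≤ phi p p.Scrit := by
  have hc := Scrit_pos p
  have h := Real.log_le_sub_one_of_pos (div_pos hs hc)
  rw [Real.log_div hs.ne' hc.ne'] at h
  have e : p.Scrit * (s / p.Scrit) = s := mul_div_cancel₀ _ hc.ne'
  have := mul_le_mul_of_nonneg_left h hc.le
  unfold phi
  nlinarith [this, e]

/-- φ is strictly below its max away from Scrit. -/
lemma phi_lt (p : SIRParams) {s : ℝ} (hs : 0 < s) (hne : s ≠ p.Scrit) :
    phi p s < phi p p.Scrit := by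
  have hc := Scrit_pos p
  have hd1 : s / p.Scrit ≠ 1 := fun h => hne ((div_eq_one_iff_eq hc.ne').mp h)
  have h := Real.log_lt_sub_one_of_pos (div_pos hs hc) hd1
  rw [Real.log_div hs.ne' hc.ne'] at h
  have e : p.Scrit * (s / p.Scrit) = s := mul_div_cancel₀ _ hc.ne'
  have := mul_lt_mul_of_pos_left h hc
  unfold phi
  nlinarith [this, e]

/-- φ is monotone below Scrit. -/
lemma phi_mono (p : SIRParams) {s1 s2 : ℝ} (h1 : 0 < s1) (h12 : s1 ≤ s2)
    (h2 : s2 ≤ p.Scrit) : phi p s1 ≤ phi p s2 := by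
  have hc := Scrit_pos p
  have hs2 : 0 < s2 := h1.trans_le h12
  have h := Real.log_le_sub_one_of_pos (div_pos h1 hs2)
  rw [Real.log_div h1.ne' hs2.ne'] at h
  have e : s2 * (s1 / s2) = s1 := mul_div_cancel₀ _ hs2.ne'
  have h3 := mul_le_mul_of_nonneg_left h hc.le
  have h4 : p.Scrit * (s1 / s2) ≤ p.Scrit := by
    apply mul_le_of_le_one_right hc.le
    exact div_le_one_of_le₀ h12 hs2.le
  have h5 : (p.Scrit - s2) * (1 - s1 / s2) ≥ 0 := by
    apply mul_nonneg (by linarith)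
    have : s1 / s2 ≤ 1 := div_le_one_of_le₀ h12 hs2.le
    linarith
  unfold phi
  nlinarith [h3, e, h5]

/-- φ is antitone above Scrit. -/
lemma phi_anti (p : SIRParams) {s1 s2 : ℝ} (hc1 : p.Scrit ≤ s1) (h12 : s1 ≤ s2) :
    phi p s2 ≤ phi p s1 := by
  have hc := Scrit_pos p
  have h1 : 0 < s1 := hc.trans_le hc1
  have hs2 : 0 < s2 := h1.trans_le h12
  have h := Real.log_le_sub_one_of_pos (div_pos hs2 h1)
  rw [Real.log_div hs2.ne' h1.ne'] at h
  have e : s1 * (s2 / s1) = s2 := mul_div_cancel₀ _ h1.ne'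
  have h3 := mul_le_mul_of_nonneg_left h hc.le
  have h5 : (s1 - p.Scrit) * (s2 / s1 - 1) ≥ 0 := by
    apply mul_nonneg (by linarith)
    have : 1 ≤ s2 / s1 := (one_le_div h1).mpr h12
    linarith
  have h6 : p.Scrit * (s2 / s1) ≤ s1 * (s2 / s1) := by
    apply mul_le_mul_of_nonneg_right hc1
    positivity
  unfold phi
  nlinarith [h3, e, h5, h6]

/-- φ is strictly antitone above Scrit. -/
lemma phi_anti_strict (p : SIRParams) {s1 s2 : ℝ} (hc1 : p.Scrit < s1) (h12 : s1 < s2) :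
    phi p s2 < phi p s1 := by
  have hc := Scrit_pos p
  have h1 : 0 < s1 := hc.trans hc1
  have hs2 : 0 < s2 := h1.trans h12
  have h := Real.log_le_sub_one_of_pos (div_pos hs2 h1)
  rw [Real.log_div hs2.ne' h1.ne'] at h
  have e : s1 * (s2 / s1) = s2 := mul_div_cancel₀ _ h1.ne'
  have h3 := mul_le_mul_of_nonneg_left h hc.le
  have hrat : 1 < s2 / s1 := (one_lt_div h1).mpr h12
  have h5 : (s1 - p.Scrit) * (s2 / s1 - 1) > 0 := by
    apply mul_pos (by linarith) (by linarith)
  unfold phi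
  nlinarith [h3, e, h5]

/-- The peak value of a no-intervention SIR trajectory in terms of initial data. -/
theorem imaxAt_eq (p : SIRParams) (t0 : ℝ) (S I : ℝ → ℝ)
    (h : IsSIRTrajectory p nullB (Set.Ici t0) S I) (hI0 : 0 < I t0) :
    ImaxAt (Set.Ici t0) I t0 =
      I t0 + phi p (min (S t0) p.Scrit) - phi p (S t0) := by
  have hβ := beta_pos p
  have hc := Scrit_pos p
  have memIci : ∀ {u : ℝ}, t0 ≤ u → u ∈ Set.Ici t0 := fun hu => hu
  have ht0 : t0 ∈ Set.Ici t0 := Set.self_mem_Ici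
  -- continuous global extensions
  set SM : ℝ → ℝ := fun s => S (max s t0) with hSMdef
  set IM : ℝ → ℝ := fun s => I (max s t0) with hIMdef
  have hmax : ∀ x : ℝ, max x t0 ∈ Set.Ici t0 := fun x => Set.mem_Ici.mpr (le_max_right x t0)
  have hSMc : Continuous SM := h.contS.comp_continuous (continuous_id.max continuous_const) hmax
  have hIMc : Continuous IM := h.contI.comp_continuous (continuous_id.max continuous_const) hmax
  have hSM_eq : ∀ s, t0 ≤ s → SM s = S s := fun s hs => by
    simp only [hSMdef, max_eq_left hs]
  have hIM_eq : ∀ s, t0 ≤ s → IM s = I s := fun s hs => by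
    simp only [hIMdef, max_eq_left hs]
  set fe : ℝ → ℝ := fun s => p.β * SM s * IM s with hfedef
  set ge : ℝ → ℝ := fun s => p.β * SM s * IM s - p.γ * IM s with hgedef
  have hfec : Continuous fe := (continuous_const.mul hSMc).mul hIMc
  have hgec : Continuous ge := hfec.sub (continuous_const.mul hIMc)
  -- integral identities
  have hSint : ∀ u, t0 ≤ u → ∀ t, u ≤ t → S t = S u - ∫ s in u..t, fe s := by
    intro u hu t hut
    have := h.S_eq u (memIci hu) t (memIci (hu.trans hut)) hut
    rw [this]
    congr 1
    apply intervalIntegral.integral_congr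
    intro s hs
    rw [Set.uIcc_of_le hut] at hs
    have hs0 : t0 ≤ s := hu.trans hs.1
    simp only [hfedef, nullB, one_mul, hSM_eq s hs0, hIM_eq s hs0]
  have hIint : ∀ u, t0 ≤ u → ∀ t, u ≤ t → I t = I u + ∫ s in u..t, ge s := by
    intro u hu t hut
    have := h.I_eq u (memIci hu) t (memIci (hu.trans hut)) hut
    rw [this]
    congr 1
    apply intervalIntegral.integral_congr
    intro s hs
    rw [Set.uIcc_of_le hut] at hs
    have hs0 : t0 ≤ s := hu.trans hs.1
    simp only [hgedef, nullB, one_mul, hSM_eq s hs0, hIM_eq s hs0]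
  -- S is nonincreasing
  have hSmono : ∀ t, t0 ≤ t → S t ≤ S t0 := by
    intro t ht
    have hint : (0:ℝ) ≤ ∫ s in t0..t, fe s := by
      apply intervalIntegral.integral_nonneg ht
      intro u hu
      have hu0 : t0 ≤ u := hu.1
      simp only [hfedef, hSM_eq u hu0, hIM_eq u hu0]
      have := h.Spos u (memIci hu0)
      have := h.Inonneg u (memIci hu0)
      positivity
    have := hSint t0 le_rfl t ht
    linarith
  -- right derivatives
  have hSder : ∀ u, t0 ≤ u →
      HasDerivWithinAt S (-(p.β * S u * I u)) (Set.Ici u) u := by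
    intro u hu
    have hfd : HasDerivAt (fun t => S u - ∫ s in u..t, fe s) (-(fe u)) u := by
      exact HasDerivAt.const_sub (S u)
        (intervalIntegral.integral_hasDerivAt_right (hfec.intervalIntegrable u u)
          (hfec.stronglyMeasurableAtFilter _ _) hfec.continuousAt)
    have := (hfd.hasDerivWithinAt (s := Set.Ici u)).congr
      (fun y hy => hSint u hu y hy) (by rw [hSint u hu u le_rfl, intervalIntegral.integral_same]; ring)
    simpa only [hfedef, hSM_eq u hu, hIM_eq u hu] using this
  have hIder : ∀ u, t0 ≤ u →
      HasDerivWithinAt I (p.β * S u * I u - p.γ * I u) (Set.Ici u) u := by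
    intro u hu
    have hfd : HasDerivAt (fun t => I u + ∫ s in u..t, ge s) (ge u) u := by
      simpa using HasDerivAt.const_add (I u)
        (intervalIntegral.integral_hasDerivAt_right (hgec.intervalIntegrable u u)
          (hgec.stronglyMeasurableAtFilter _ _) hgec.continuousAt)
    have := (hfd.hasDerivWithinAt (s := Set.Ici u)).congr
      (fun y hy => hIint u hu y hy) (by rw [hIint u hu u le_rfl, intervalIntegral.integral_same]; ring)
    simpa only [hgedef, hSM_eq u hu, hIM_eq u hu] using this
  -- conserved quantity
  set W : ℝ → ℝ := fun t => I t + S t - p.Scrit * Real.log (S t) with hWdef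
  have hWconst : ∀ t, t0 ≤ t → W t = W t0 := by
    intro T hT
    have hsub : Set.Icc t0 T ⊆ Set.Ici t0 := Set.Icc_subset_Ici_self
    have hWcont : ContinuousOn W (Set.Icc t0 T) := by
      apply ((h.contI.mono hsub).add (h.contS.mono hsub)).sub
      exact continuousOn_const.mul ((h.contS.mono hsub).log
        (fun x hx => (h.Spos x (hsub hx)).ne'))
    have hWder : ∀ x ∈ Set.Ico t0 T, HasDerivWithinAt W 0 (Set.Ici x) x := by
      intro x hx
      have hx0 : t0 ≤ x := hx.1
      have hSx := h.Spos x (memIci hx0)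
      have hS := hSder x hx0
      have hI := hIder x hx0
      have hlog : HasDerivWithinAt (fun t => Real.log (S t))
          (-(p.β * S x * I x) / S x) (Set.Ici x) x := hS.log hSx.ne'
      have hcomb := (hI.add hS).sub (hlog.const_mul p.Scrit)
      have hsb := Scrit_mul_beta p
      have hval : p.β * S x * I x - p.γ * I x + -(p.β * S x * I x) -
          p.Scrit * (-(p.β * S x * I x) / S x) = 0 := by
        field_simp
        linear_combination (I x) * hsb
      rw [hval] at hcomb
      exact hcomb
    exact (constant_of_has_deriv_right_zero hWcont hWder T (Set.mem_Icc.mpr ⟨hT, le_rfl⟩))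
  have hIval : ∀ t, t0 ≤ t → I t = I t0 + phi p (S t) - phi p (S t0) := by
    intro t ht
    have := hWconst t ht
    simp only [hWdef] at this
    unfold phi
    linarith
  -- bounds for the sup
  have hbdd : BddAbove (I '' (Set.Ici t0 ∩ Set.Ici t0)) := by
    refine ⟨1, ?_⟩
    rintro y ⟨t, ht, rfl⟩
    have ht0 : t0 ≤ t := ht.1
    have := h.sum_le_one t (memIci ht0)
    have := h.Spos t (memIci ht0)
    linarith
  have hne : (I '' (Set.Ici t0 ∩ Set.Ici t0)).Nonempty :=
    ⟨I t0, ⟨t0, ⟨memIci le_rfl, memIci le_rfl⟩, rfl⟩⟩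
  rw [ImaxAt]
  rcases le_or_gt (S t0) p.Scrit with hcase | hcase
  · -- subcritical: peak is I t0
    rw [min_eq_left hcase]
    have hub : ∀ y ∈ I '' (Set.Ici t0 ∩ Set.Ici t0), y ≤ I t0 := by
      rintro y ⟨t, ht, rfl⟩
      have ht0 : t0 ≤ t := ht.1
      rw [hIval t ht0]
      have := phi_mono p (h.Spos t (memIci ht0)) (hSmono t ht0) hcase
      linarith
    have h1 : sSup (I '' (Set.Ici t0 ∩ Set.Ici t0)) ≤ I t0 := csSup_le hne hub
    have h2 : I t0 ≤ sSup (I '' (Set.Ici t0 ∩ Set.Ici t0)) :=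
      le_csSup hbdd ⟨t0, ⟨memIci le_rfl, memIci le_rfl⟩, rfl⟩
    linarith
  · -- supercritical: peak is attained where S = Scrit
    rw [min_eq_right hcase.le]
    have hub : ∀ y ∈ I '' (Set.Ici t0 ∩ Set.Ici t0),
        y ≤ I t0 + phi p p.Scrit - phi p (S t0) := by
      rintro y ⟨t, ht, rfl⟩
      have ht0 : t0 ≤ t := ht.1
      rw [hIval t ht0]
      have := phi_le p (h.Spos t (memIci ht0))
      linarith
    have h1 := csSup_le hne hub
    -- existence of a time with S t ≤ Scrit
    have hex : ∃ t, t0 ≤ t ∧ S t ≤ p.Scrit := by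
      by_contra hno
      push_neg at hno
      have hSc : ∀ t, t0 ≤ t → p.Scrit < S t := fun t ht => hno t ht
      have hImono : ∀ t, t0 ≤ t → I t0 ≤ I t := by
        intro t ht
        have hint : (0:ℝ) ≤ ∫ s in t0..t, ge s := by
          apply intervalIntegral.integral_nonneg ht
          intro u hu
          have hu0 : t0 ≤ u := hu.1
          simp only [hgedef, hSM_eq u hu0, hIM_eq u hu0]
          have h1 := hSc u hu0
          have h2 := h.Inonneg u (memIci hu0)
          have h3 : p.γ ≤ p.β * S u := by
            have := Scrit_mul_beta p
            nlinarith
          nlinarith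
        have := hIint t0 le_rfl t ht
        linarith
      set K : ℝ := p.β * p.Scrit * I t0 with hKdef
      have hK : 0 < K := by positivity
      set T : ℝ := t0 + S t0 / K + 1 with hTdef
      have hT0 : t0 ≤ T := by
        have : 0 ≤ S t0 / K := div_nonneg (h.Spos t0 (memIci le_rfl)).le hK.le
        simp only [hTdef]; linarith
      have hintlb : K * (T - t0) ≤ ∫ s in t0..T, fe s := by
        have := intervalIntegral.integral_mono_on (f := fun _ => K) (g := fe)
          (μ := MeasureTheory.volume) hT0
          (intervalIntegrable_const) (hfec.intervalIntegrable t0 T) ?_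
        · rw [intervalIntegral.integral_const, smul_eq_mul] at this
          calc K * (T - t0) = (T - t0) * K := mul_comm _ _
            _ ≤ _ := this
        · intro u hu
          have hu0 : t0 ≤ u := hu.1
          simp only [hfedef, hSM_eq u hu0, hIM_eq u hu0, hKdef]
          have h1 := (hSc u hu0).le
          have h2 := hImono u hu0
          have h3 := h.Inonneg u (memIci hu0)
          nlinarith [mul_nonneg (mul_nonneg hβ.le (sub_nonneg.2 h1)) h3,
            mul_nonneg (mul_nonneg hβ.le hc.le) (sub_nonneg.2 h2)]
      have hST := hSint t0 le_rfl T hT0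
      have hKT : S t0 + K ≤ K * (T - t0) := by
        have : K * (T - t0) = S t0 + K := by
          simp only [hTdef]
          field_simp
          ring
        linarith
      have := h.Spos T (memIci hT0)
      linarith
    obtain ⟨t2, ht2, hSt2⟩ := hex
    have hIVT := intermediate_value_Icc' ht2 (h.contS.mono
      (Set.Icc_subset_Ici_self))
    have hmem : p.Scrit ∈ Set.Icc (S t2) (S t0) := ⟨hSt2, hcase.le⟩
    obtain ⟨t1, ht1mem, hSt1⟩ := hIVT hmem
    have ht10 : t0 ≤ t1 := ht1mem.1
    have h2 : I t0 + phi p p.Scrit - phi p (S t0) ≤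
        sSup (I '' (Set.Ici t0 ∩ Set.Ici t0)) := by
      have : I t1 = I t0 + phi p p.Scrit - phi p (S t0) := by
        rw [hIval t1 ht10, hSt1]
      rw [← this]
      exact le_csSup hbdd ⟨t1, ⟨memIci ht10, memIci ht10⟩, rfl⟩
    linarith

/-- Monotonicity of the peak formula in the initial susceptible fraction. -/
lemma peak_mono (p : SIRParams) {sx sy : ℝ} (hx : 0 < sx) (hle : sx ≤ sy) :
    phi p (min sx p.Scrit) - phi p sx ≤ phi p (min sy p.Scrit) - phi p sy ∧
    (phi p (min sx p.Scrit) - phi p sx = phi p (min sy p.Scrit) - phi p sy →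
      sx = sy ∨ sy ≤ p.Scrit) := by
  have hy : 0 < sy := hx.trans_le hle
  rcases le_or_gt sy p.Scrit with hyc | hyc
  · rw [min_eq_left (hle.trans hyc), min_eq_left hyc]
    exact ⟨by linarith, fun _ => Or.inr hyc⟩
  · rw [min_eq_right hyc.le]
    rcases le_or_gt sx p.Scrit with hxc | hxc
    · rw [min_eq_left hxc]
      have hstrict : phi p sy < phi p p.Scrit := phi_lt p hy (by linarith)
      exact ⟨by linarith, fun heq => absurd heq (by intro heq; linarith)⟩
    · rw [min_eq_right hxc.le]
      have hmono : phi p sy ≤ phi p sx := phi_anti p hxc.le hle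
      refine ⟨by linarith, fun heq => ?_⟩
      by_contra hcon
      push_neg at hcon
      have hne : sx ≠ sy := hcon.1
      have hlt : sx < sy := lt_of_le_of_ne hle hne
      have := phi_anti_strict p hxc hlt
      linarith

end MoreFuelAux

/-- The more fuel, the bigger the blaze: starting from equal
infectious fractions, a larger susceptible fraction yields a larger peak. -/
theorem more_fuel_bigger_blaze (p : SIRParams) (tx ty : ℝ)
    (Sx Ix Sy Iy : ℝ → ℝ)
    (hx : IsSIRTrajectory p nullB (Set.Ici tx) Sx Ix)
    (hy : IsSIRTrajectory p nullB (Set.Ici ty) Sy Iy)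
    (hIeq : Ix tx = Iy ty) (hIpos : 0 < Iy ty) (hSle : Sx tx ≤ Sy ty) :
    ImaxAt (Set.Ici tx) Ix tx ≤ ImaxAt (Set.Ici ty) Iy ty ∧
    (ImaxAt (Set.Ici tx) Ix tx = ImaxAt (Set.Ici ty) Iy ty →
      Sx tx = Sy ty ∨ Sy ty ≤ p.Scrit) := by
  have hx0 : 0 < Ix tx := hIeq ▸ hIpos
  have hSxpos : 0 < Sx tx := hx.Spos tx Set.self_mem_Ici
  rw [MoreFuelAux.imaxAt_eq p tx Sx Ix hx hx0, MoreFuelAux.imaxAt_eq p ty Sy Iy hy hIpos,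
    hIeq]
  obtain ⟨hle, heq⟩ := MoreFuelAux.peak_mono p hSxpos hSle
  exact ⟨by linarith, fun h => heq (by linarith)⟩
end
end

section
/- (More fire, less fuel.) Let b_x and b_y be two interventions, both with start time t_i and duration τ, and set t_f = t_i + τ. Let (S_x, I_x) and (S_y, I_y) be SIR trajectories under b_x and b_y respectively, defined on [t_i, ∞), with the same initial state: S_x(t_i) = S_y(t_i) and I_x(t_i) = I_y(t_i). If I_x(t) ≥ I_y(t) for all t ∈ [t_i, t_f] and I_x(t) > I_y(t) for some t ∈ (t_i, t_f), then S_x(t_f) < S_y(t_f). -/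
noncomputable section

open MeasureTheory Set intervalIntegral

lemma aesm_of_finite_disc {b : ℝ → ℝ}
    (hD : {t : ℝ | ¬ ContinuousAt b t}.Finite) :
    AEStronglyMeasurable b volume := by
  set D := {t : ℝ | ¬ ContinuousAt b t} with hDdef
  have hmeas : MeasurableSet Dᶜ := hD.measurableSet.compl
  have hcont : ContinuousOn b Dᶜ := fun x hx => (not_not.mp hx).continuousWithinAt
  have h0 : volume D = 0 := hD.measure_zero _
  have h1 : AEStronglyMeasurable b (volume.restrict Dᶜ) :=
    hcont.aestronglyMeasurable hmeas
  refine h1.mono_ac ?_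
  intro s hs
  rw [Measure.restrict_apply' hmeas] at hs
  have : volume s ≤ volume (s ∩ Dᶜ) + volume D := by
    refine le_trans (measure_mono ?_) (measure_union_le _ _)
    intro x hx
    by_cases hxD : x ∈ D
    · exact Or.inr hxD
    · exact Or.inl ⟨hx, hxD⟩
  simpa [hs, h0] using this

lemma traj_integrable (p : SIRParams) (b : ℝ → ℝ) (J : Set ℝ) (S I : ℝ → ℝ)
    (h : IsSIRTrajectory p b J S I)
    (hb : ∀ t, b t ∈ Set.Icc (0 : ℝ) 1)
    (hD : {t : ℝ | ¬ ContinuousAt b t}.Finite)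
    (a c : ℝ) (ha : a ∈ J) (hac : a ≤ c) :
    IntervalIntegrable (fun s => b s * p.β * S s * I s) volume a c := by
  have hsub : Set.Icc a c ⊆ J := fun x hx => h.upClosed a ha x hx.1
  have hsub' : Set.Ioc a c ⊆ J := fun x hx => hsub (Ioc_subset_Icc_self hx)
  rw [intervalIntegrable_iff_integrableOn_Ioc_of_le hac]
  have haesm : AEStronglyMeasurable (fun s => b s * p.β * S s * I s)
      (volume.restrict (Set.Ioc a c)) := by
    refine (((aesm_of_finite_disc hD).restrict.mul aestronglyMeasurable_const).mul
      ?_).mul ?_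
    · exact ((h.contS.mono hsub').aestronglyMeasurable measurableSet_Ioc)
    · exact ((h.contI.mono hsub').aestronglyMeasurable measurableSet_Ioc)
  have hconst : IntegrableOn (fun _ : ℝ => p.β) (Set.Ioc a c) volume :=
    integrableOn_const measure_Ioc_lt_top.ne
  refine Integrable.mono' hconst haesm ?_
  filter_upwards [ae_restrict_mem measurableSet_Ioc] with s hs
  have hsJ : s ∈ J := hsub' hs
  have h1 := (hb s).1
  have h2 := (hb s).2
  have h3 := h.Spos s hsJ
  have h4 := h.Sle_one s hsJ
  have h5 := h.Inonneg s hsJ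
  have h6 := h.sum_le_one s hsJ
  have hβ : (0:ℝ) < p.β := p.hγ.trans p.hβγ
  have hI1 : I s ≤ 1 := by linarith
  rw [Real.norm_eq_abs, abs_of_nonneg (by positivity)]
  calc b s * p.β * S s * I s ≤ 1 * p.β * 1 * 1 := by
        apply mul_le_mul
        apply mul_le_mul
        apply mul_le_mul h2 le_rfl hβ.le zero_le_one
        exact h4
        exact h3.le
        positivity
        exact hI1
        exact h5
        positivity
      _ = p.β := by ring

lemma sum_eq (p : SIRParams) (b : ℝ → ℝ) (J : Set ℝ) (S I : ℝ → ℝ)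
    (h : IsSIRTrajectory p b J S I)
    (hb : ∀ t, b t ∈ Set.Icc (0 : ℝ) 1)
    (hD : {t : ℝ | ¬ ContinuousAt b t}.Finite)
    (a c : ℝ) (ha : a ∈ J) (hac : a ≤ c) :
    S c + I c = S a + I a - ∫ s in a..c, p.γ * I s := by
  have hc : c ∈ J := h.upClosed a ha c hac
  have hsub' : Set.Ioc a c ⊆ J := fun x hx => h.upClosed a ha x hx.1.le
  have hf := traj_integrable p b J S I h hb hD a c ha hac
  have hsub : Set.Icc a c ⊆ J := fun x hx => h.upClosed a ha x hx.1
  have hγI : IntervalIntegrable (fun s => p.γ * I s) volume a c :=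
    ((continuousOn_const.mul (h.contI.mono hsub)).intervalIntegrable_of_Icc hac)
  have hSeq := h.S_eq a ha c hc hac
  have hIeq := h.I_eq a ha c hc hac
  rw [intervalIntegral.integral_sub hf hγI] at hIeq
  linarith

theorem more_fire_less_fuel' (p : SIRParams) (bx by' : Intervention p)
    (hti : by'.ti = bx.ti) (hτ : by'.τ = bx.τ)
    (Sx Ix Sy Iy : ℝ → ℝ)
    (hx : IsSIRTrajectory p bx.b (Set.Ici bx.ti) Sx Ix)
    (hy : IsSIRTrajectory p by'.b (Set.Ici bx.ti) Sy Iy)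
    (hS0 : Sx bx.ti = Sy bx.ti) (hI0 : Ix bx.ti = Iy bx.ti)
    (hge : ∀ t ∈ Set.Icc bx.ti (bx.ti + bx.τ), Iy t ≤ Ix t)
    (hgt : ∃ t ∈ Set.Ioo bx.ti (bx.ti + bx.τ), Iy t < Ix t) :
    Sx (bx.ti + bx.τ) < Sy (bx.ti + bx.τ) := by
  set t0 := bx.ti
  set tf := bx.ti + bx.τ with htf
  have hlt : t0 < tf := by exact lt_add_of_pos_right _ bx.hτ
  have ht0 : t0 ∈ Set.Ici bx.ti := Set.self_mem_Ici
  have hsub : Set.Icc t0 tf ⊆ Set.Ici bx.ti := fun x hx => hx.1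
  have hx' := sum_eq p bx.b _ Sx Ix hx bx.mem_Icc bx.finiteDisc t0 tf ht0 hlt.le
  have hy' := sum_eq p by'.b _ Sy Iy hy by'.mem_Icc by'.finiteDisc t0 tf ht0 hlt.le
  have hstrict : (∫ s in t0..tf, p.γ * Iy s) < ∫ s in t0..tf, p.γ * Ix s := by
    apply intervalIntegral.integral_lt_integral_of_continuousOn_of_le_of_exists_lt hlt
    · exact continuousOn_const.mul (hy.contI.mono hsub)
    · exact continuousOn_const.mul (hx.contI.mono hsub)
    · intro s hs
      exact mul_le_mul_of_nonneg_left (hge s (Ioc_subset_Icc_self hs)) p.hγ.le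
    · obtain ⟨t, ht, hlt'⟩ := hgt
      exact ⟨t, Ioo_subset_Icc_self ht, by nlinarith [p.hγ]⟩
  have hend : Iy tf ≤ Ix tf := hge tf ⟨hlt.le, le_refl _⟩
  linarith

/-- More fire, less fuel: if intervention `x` keeps at least as
many (and at some time strictly more) infectious individuals than intervention
`y` throughout, it ends with strictly fewer susceptibles. -/
theorem more_fire_less_fuel (p : SIRParams) (bx by' : Intervention p)
    (hti : by'.ti = bx.ti) (hτ : by'.τ = bx.τ)
    (Sx Ix Sy Iy : ℝ → ℝ)
    (hx : IsSIRTrajectory p bx.b (Set.Ici bx.ti) Sx Ix)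
    (hy : IsSIRTrajectory p by'.b (Set.Ici bx.ti) Sy Iy)
    (hS0 : Sx bx.ti = Sy bx.ti) (hI0 : Ix bx.ti = Iy bx.ti)
    (hge : ∀ t ∈ Set.Icc bx.ti (bx.ti + bx.τ), Iy t ≤ Ix t)
    (hgt : ∃ t ∈ Set.Ioo bx.ti (bx.ti + bx.τ), Iy t < Ix t) :
    Sx (bx.ti + bx.τ) < Sy (bx.ti + bx.τ) := by
  exact more_fire_less_fuel' p bx by' hti hτ Sx Ix Sy Iy hx hy hS0 hI0 hge hgt
end
end

section
/- (Do nothing to burn faster and brighter.) Let t_max be a time at which I₁ attains its supremum, i.e., I₁(t_max) = sup_{t∈ℝ} I₁(t). Let b_x be an intervention with start time t_i and duration τ such that for some ε > 0 and some t̄ < t_max one has b_x(t) < 1 for almost every t ∈ [t̄ − ε, t̄ + ε]. Then the controlled trajectory (S_{b_x}, I_{b_x}) satisfies I_{b_x}(t) < I₁(t) for all t ∈ [t̄, t_max]. -/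
noncomputable section

open Set Filter MeasureTheory intervalIntegral Real

lemma measurable_of_finite_discont {b : ℝ → ℝ} (h : {t : ℝ | ¬ ContinuousAt b t}.Finite) :
    Measurable b := by
  set D := {t : ℝ | ¬ ContinuousAt b t} with hD
  have hDcl : IsClosed D := h.isClosed
  have hcont : ContinuousOn b Dᶜ := fun x hx => (not_not.mp hx).continuousWithinAt
  refine measurable_of_isOpen fun U hU => ?_
  have : b ⁻¹' U = (Dᶜ ∩ b ⁻¹' U) ∪ (D ∩ b ⁻¹' U) := by
    ext x; by_cases hx : x ∈ D <;> simp [hx]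
  rw [this]
  exact ((hcont.isOpen_inter_preimage hDcl.isOpen_compl hU).measurableSet).union
    ((h.inter_of_left _).measurableSet)

/-- Monotone glue lemma: derivative nonneg off a finite set implies `f a ≤ f b`. -/
lemma le_of_deriv_nonneg_off_finite {D : Set ℝ} (hD : D.Finite) :
    ∀ (f f' : ℝ → ℝ) (a b : ℝ), a ≤ b → ContinuousOn f (Icc a b) →
    (∀ x ∈ Ioo a b \ D, HasDerivAt f (f' x) x) →
    (∀ x ∈ Ioo a b \ D, 0 ≤ f' x) → f a ≤ f b := by
  refine Set.Finite.induction_on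
    (motive := fun D _ => ∀ (f f' : ℝ → ℝ) (a b : ℝ), a ≤ b → ContinuousOn f (Icc a b) →
      (∀ x ∈ Ioo a b \ D, HasDerivAt f (f' x) x) →
      (∀ x ∈ Ioo a b \ D, 0 ≤ f' x) → f a ≤ f b) D hD ?_ ?_
  ·
    intro f f' a b hab hcont hderiv hpos
    rcases eq_or_lt_of_le hab with rfl | hab
    · exact le_rfl
    · have hmono : MonotoneOn f (Icc a b) := by
        apply monotoneOn_of_deriv_nonneg (convex_Icc a b) hcont
        · intro x hx
          rw [interior_Icc] at hx
          exact (hderiv x ⟨hx, notMem_empty x⟩).differentiableAt.differentiableWithinAt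
        · intro x hx
          rw [interior_Icc] at hx
          rw [(hderiv x ⟨hx, notMem_empty x⟩).deriv]
          exact hpos x ⟨hx, notMem_empty x⟩
      exact hmono (left_mem_Icc.2 hab.le) (right_mem_Icc.2 hab.le) hab.le
  · intro d E hdE hE ih
    intro f f' a b hab hcont hderiv hpos
    by_cases hd : d ∈ Ioo a b
    · have h1 : f a ≤ f d := by
        refine ih f f' a d hd.1.le (hcont.mono (Icc_subset_Icc le_rfl hd.2.le)) ?_ ?_ <;>
        · intro x hx
          have hx' : x ∈ Ioo a b \ insert d E :=
            ⟨⟨hx.1.1, hx.1.2.trans hd.2⟩, by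
              simp only [mem_insert_iff, not_or]; exact ⟨ne_of_lt hx.1.2, hx.2⟩⟩
          first | exact hderiv x hx' | exact hpos x hx'
      have h2 : f d ≤ f b := by
        refine ih f f' d b hd.2.le (hcont.mono (Icc_subset_Icc hd.1.le le_rfl)) ?_ ?_ <;>
        · intro x hx
          have hx' : x ∈ Ioo a b \ insert d E :=
            ⟨⟨hd.1.trans hx.1.1, hx.1.2⟩, by
              simp only [mem_insert_iff, not_or]; exact ⟨(ne_of_gt hx.1.1), hx.2⟩⟩
          first | exact hderiv x hx' | exact hpos x hx'
      exact h1.trans h2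
    · refine ih f f' a b hab hcont ?_ ?_ <;>
      · intro x hx
        have hx' : x ∈ Ioo a b \ insert d E :=
          ⟨hx.1, by
            simp only [mem_insert_iff, not_or]
            exact ⟨fun h => hd (h ▸ hx.1), hx.2⟩⟩
        first | exact hderiv x hx' | exact hpos x hx'

lemma ge_of_deriv_nonpos_off_finite {D : Set ℝ} (hD : D.Finite)
    (f f' : ℝ → ℝ) (a b : ℝ) (hab : a ≤ b) (hcont : ContinuousOn f (Icc a b))
    (hderiv : ∀ x ∈ Ioo a b \ D, HasDerivAt f (f' x) x)
    (hneg : ∀ x ∈ Ioo a b \ D, f' x ≤ 0) : f b ≤ f a := by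
  have := le_of_deriv_nonneg_off_finite hD (fun t => -f t) (fun t => -f' t) a b hab
    hcont.neg (fun x hx => (hderiv x hx).neg) (fun x hx => neg_nonneg.2 (hneg x hx))
  simpa using this

section SIRHelpers

open Set Filter MeasureTheory intervalIntegral Real

lemma SIRParams.βpos (p : SIRParams) : 0 < p.β := p.hγ.trans p.hβγ

lemma SIRParams.Scrit_pos (p : SIRParams) : 0 < p.Scrit := div_pos p.hγ p.βpos

lemma SIRParams.Scrit_lt_one (p : SIRParams) : p.Scrit < 1 := by
  rw [SIRParams.Scrit, div_lt_one p.βpos]; exact p.hβγ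

lemma intervalIntegrable_of_bdd {f : ℝ → ℝ} {C a b : ℝ} (hm : Measurable f)
    (hb : ∀ s, |f s| ≤ C) : IntervalIntegrable f volume a b := by
  rw [intervalIntegrable_iff]
  refine Integrable.mono' (g := fun _ => C) ?_ hm.aestronglyMeasurable.restrict ?_
  · exact integrableOn_const measure_Ioc_lt_top.ne
  · exact Filter.Eventually.of_forall fun s => by simpa using hb s

variable {p : SIRParams} {B S I : ℝ → ℝ}

lemma traj_contS (traj : IsSIRTrajectory p B Set.univ S I) : Continuous S :=
  continuousOn_univ.mp traj.contS

lemma traj_contI (traj : IsSIRTrajectory p B Set.univ S I) : Continuous I :=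
  continuousOn_univ.mp traj.contI

lemma traj_I_le_one (traj : IsSIRTrajectory p B Set.univ S I) (t : ℝ) : I t ≤ 1 := by
  have h1 := traj.sum_le_one t trivial
  have h2 := traj.Spos t trivial
  linarith

lemma traj_fS_meas (hB : Measurable B) (traj : IsSIRTrajectory p B Set.univ S I) :
    Measurable (fun s => B s * p.β * S s * I s) :=
  ((hB.mul measurable_const).mul (traj_contS traj).measurable).mul (traj_contI traj).measurable

lemma traj_fS_bdd (hB01 : ∀ t, B t ∈ Set.Icc (0:ℝ) 1)
    (traj : IsSIRTrajectory p B Set.univ S I) (s : ℝ) :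
    |B s * p.β * S s * I s| ≤ p.β := by
  have h1 := (hB01 s).1; have h2 := (hB01 s).2
  have h3 := traj.Spos s trivial; have h4 := traj.Sle_one s trivial
  have h5 := traj.Inonneg s trivial; have h6 := traj_I_le_one traj s
  have hβ := p.βpos
  rw [abs_le]
  have hBSI : B s * S s * I s ≤ 1 := mul_le_one₀ (mul_le_one₀ h2 h3.le h4) h5 h6
  have hnn : 0 ≤ B s * p.β * S s * I s :=
    mul_nonneg (mul_nonneg (mul_nonneg h1 hβ.le) h3.le) h5
  constructor
  · linarith
  · nlinarith

lemma traj_fS_int (hB : Measurable B) (hB01 : ∀ t, B t ∈ Set.Icc (0:ℝ) 1)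
    (traj : IsSIRTrajectory p B Set.univ S I) (a b : ℝ) :
    IntervalIntegrable (fun s => B s * p.β * S s * I s) volume a b :=
  intervalIntegrable_of_bdd (traj_fS_meas hB traj) (traj_fS_bdd hB01 traj)

lemma traj_hasDerivAt_S (hB : Measurable B) (hB01 : ∀ t, B t ∈ Set.Icc (0:ℝ) 1)
    (traj : IsSIRTrajectory p B Set.univ S I) {t : ℝ} (hBc : ContinuousAt B t) :
    HasDerivAt S (-(B t * p.β * S t * I t)) t := by
  have hFTC : HasDerivAt (fun u => ∫ s in (t-1)..u, B s * p.β * S s * I s)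
      (B t * p.β * S t * I t) t := by
    refine intervalIntegral.integral_hasDerivAt_right (traj_fS_int hB hB01 traj _ _)
      ⟨Set.univ, univ_mem, (traj_fS_meas hB traj).aestronglyMeasurable.restrict⟩ ?_
    exact ((hBc.mul continuousAt_const).mul (traj_contS traj).continuousAt).mul
      (traj_contI traj).continuousAt
  have heq : S =ᶠ[nhds t] (fun u => S (t-1) - ∫ s in (t-1)..u, B s * p.β * S s * I s) := by
    filter_upwards [Ioi_mem_nhds (show t - 1 < t by linarith)] with u hu
    exact traj.S_eq (t-1) trivial u trivial hu.le
  exact (hFTC.const_sub (S (t-1))).congr_of_eventuallyEq heq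

lemma traj_hasDerivAt_I (hB : Measurable B) (hB01 : ∀ t, B t ∈ Set.Icc (0:ℝ) 1)
    (traj : IsSIRTrajectory p B Set.univ S I) {t : ℝ} (hBc : ContinuousAt B t) :
    HasDerivAt I (B t * p.β * S t * I t - p.γ * I t) t := by
  have hint : IntervalIntegrable (fun s => B s * p.β * S s * I s - p.γ * I s) volume (t-1) t :=
    (traj_fS_int hB hB01 traj _ _).sub
      ((continuous_const.mul (traj_contI traj)).intervalIntegrable _ _)
  have hmeas : Measurable (fun s => B s * p.β * S s * I s - p.γ * I s) :=
    (traj_fS_meas hB traj).sub (measurable_const.mul (traj_contI traj).measurable)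
  have hFTC : HasDerivAt (fun u => ∫ s in (t-1)..u, (B s * p.β * S s * I s - p.γ * I s))
      (B t * p.β * S t * I t - p.γ * I t) t := by
    refine intervalIntegral.integral_hasDerivAt_right hint
      ⟨Set.univ, univ_mem, hmeas.aestronglyMeasurable.restrict⟩ ?_
    exact (((hBc.mul continuousAt_const).mul (traj_contS traj).continuousAt).mul
      (traj_contI traj).continuousAt).sub (continuousAt_const.mul (traj_contI traj).continuousAt)
  have heq : I =ᶠ[nhds t] (fun u => I (t-1) + ∫ s in (t-1)..u, (B s * p.β * S s * I s - p.γ * I s)) := by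
    filter_upwards [Ioi_mem_nhds (show t - 1 < t by linarith)] with u hu
    exact traj.I_eq (t-1) trivial u trivial hu.le
  exact (hFTC.const_add (I (t-1))).congr_of_eventuallyEq heq

lemma traj_hasDerivAt_logS (hB : Measurable B) (hB01 : ∀ t, B t ∈ Set.Icc (0:ℝ) 1)
    (traj : IsSIRTrajectory p B Set.univ S I) {t : ℝ} (hBc : ContinuousAt B t) :
    HasDerivAt (fun u => Real.log (S u)) (-(B t * p.β * I t)) t := by
  have h := (traj_hasDerivAt_S hB hB01 traj hBc).log (traj.Spos t trivial).ne'
  convert h using 1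
  have hS := (traj.Spos t trivial).ne'
  field_simp

lemma traj_hasDerivAt_V (hB : Measurable B) (hB01 : ∀ t, B t ∈ Set.Icc (0:ℝ) 1)
    (traj : IsSIRTrajectory p B Set.univ S I) {t : ℝ} (hBc : ContinuousAt B t) :
    HasDerivAt (fun u => I u + S u - p.Scrit * Real.log (S u))
      (p.γ * I t * (B t - 1)) t := by
  have h := ((traj_hasDerivAt_I hB hB01 traj hBc).add
    (traj_hasDerivAt_S hB hB01 traj hBc)).sub
    ((traj_hasDerivAt_logS hB hB01 traj hBc).const_mul p.Scrit)
  refine h.congr_deriv ?_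
  have hβ := p.βpos.ne'
  rw [SIRParams.Scrit]
  field_simp
  ring

end SIRHelpers

section MoreHelpers

open Set Filter MeasureTheory intervalIntegral Real

lemma exp_sub_le_of_nonpos {a b : ℝ} (hab : a ≤ b) (hb : b ≤ 0) :
    Real.exp b - Real.exp a ≤ b - a := by
  have h1 := Real.add_one_le_exp (a - b)
  have h2 : Real.exp a = Real.exp b * Real.exp (a - b) := by
    rw [← Real.exp_add]; ring_nf
  have h3 : Real.exp b ≤ 1 := Real.exp_le_one_iff.2 hb
  have h4 : Real.exp b * (a - b + 1) ≤ Real.exp a := by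
    rw [h2]; exact mul_le_mul_of_nonneg_left h1 (Real.exp_pos b).le
  nlinarith [Real.exp_pos b, mul_nonneg (sub_nonneg.2 h3) (sub_nonneg.2 hab)]

lemma abs_sub_le_abs_log {x y : ℝ} (hx : 0 < x) (hx1 : x ≤ 1) (hy : 0 < y) (hy1 : y ≤ 1) :
    |x - y| ≤ |Real.log x - Real.log y| := by
  wlog h : x ≤ y generalizing x y
  · rw [abs_sub_comm, abs_sub_comm (Real.log x)]
    exact this hy hy1 hx hx1 (le_of_not_ge h)
  have hlog : Real.log x ≤ Real.log y := (Real.log_le_log_iff hx hy).2 h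
  rw [abs_of_nonpos (by linarith), abs_of_nonpos (by linarith)]
  have h2 := exp_sub_le_of_nonpos hlog (Real.log_nonpos hy.le hy1)
  rw [Real.exp_log hx, Real.exp_log hy] at h2
  linarith

end MoreHelpers

open Set Filter MeasureTheory intervalIntegral Real

/-- Do nothing to burn faster and brighter: any intervention that
genuinely reduces transmission on some interval before the uncontrolled peak
time keeps prevalence strictly below the uncontrolled trajectory from then
until the uncontrolled peak time. -/
theorem do_nothing_burn_faster (p : SIRParams) (S1 I1 : ℝ → ℝ)
    (href : IsReference p S1 I1)
    (tmax : ℝ) (hmax : I1 tmax = sSup (Set.range I1))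
    (bx : Intervention p) (Sx Ix : ℝ → ℝ)
    (hc : IsControlled p S1 I1 bx Sx Ix)
    (tb ε : ℝ) (hε : 0 < ε) (htb : tb < tmax)
    (hae : ∀ᵐ t ∂(MeasureTheory.volume),
      t ∈ Set.Icc (tb - ε) (tb + ε) → bx.b t < 1) :
    ∀ t ∈ Set.Icc tb tmax, Ix t < I1 t := by
  obtain ⟨traj1, hI1pos, -, -⟩ := href
  obtain ⟨trajx, hcoin⟩ := hc
  have hβ : 0 < p.β := p.βpos
  have hγ : 0 < p.γ := p.hγ
  have hcpos : 0 < p.Scrit := p.Scrit_pos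
  have hc1 : p.Scrit < 1 := p.Scrit_lt_one
  have hBm : Measurable bx.b := measurable_of_finite_discont bx.finiteDisc
  have hB01 := bx.mem_Icc
  have hNm : Measurable nullB := measurable_const
  have hN01 : ∀ t, nullB t ∈ Set.Icc (0:ℝ) 1 := fun t => ⟨zero_le_one, le_rfl⟩
  have hNc : ∀ t : ℝ, ContinuousAt nullB t := fun t => continuousAt_const
  have hD := bx.finiteDisc
  have hS1c : Continuous S1 := traj_contS traj1
  have hI1c : Continuous I1 := traj_contI traj1
  have hSxc : Continuous Sx := traj_contS trajx
  have hIxc : Continuous Ix := traj_contI trajx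
  have hS1pos : ∀ t, 0 < S1 t := fun t => traj1.Spos t trivial
  have hSxpos : ∀ t, 0 < Sx t := fun t => trajx.Spos t trivial
  have hS1le1 : ∀ t, S1 t ≤ 1 := fun t => traj1.Sle_one t trivial
  have hSxle1 : ∀ t, Sx t ≤ 1 := fun t => trajx.Sle_one t trivial
  have hIxnn : ∀ t, 0 ≤ Ix t := fun t => trajx.Inonneg t trivial
  -- V1 is constant
  have hV1deriv : ∀ t : ℝ,
      HasDerivAt (fun u => I1 u + S1 u - p.Scrit * Real.log (S1 u)) 0 t := by
    intro t
    have h := traj_hasDerivAt_V hNm hN01 traj1 (hNc t)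
    have h0 : p.γ * I1 t * (nullB t - 1) = 0 := by simp [nullB]
    rwa [h0] at h
  have hV1cont : Continuous (fun u => I1 u + S1 u - p.Scrit * Real.log (S1 u)) :=
    (hI1c.add hS1c).sub (continuous_const.mul (hS1c.log fun t => (hS1pos t).ne'))
  have hV1const : ∀ u v : ℝ, I1 u + S1 u - p.Scrit * Real.log (S1 u)
      = I1 v + S1 v - p.Scrit * Real.log (S1 v) := by
    have key : ∀ u v : ℝ, u ≤ v → I1 v + S1 v - p.Scrit * Real.log (S1 v)
        = I1 u + S1 u - p.Scrit * Real.log (S1 u) := by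
      intro u v huv
      have h1 := ge_of_deriv_nonpos_off_finite finite_empty
        (fun u => I1 u + S1 u - p.Scrit * Real.log (S1 u)) (fun _ => (0:ℝ)) u v huv
        hV1cont.continuousOn (fun x _ => hV1deriv x) (fun x _ => le_rfl)
      have h2 := le_of_deriv_nonneg_off_finite finite_empty
        (fun u => I1 u + S1 u - p.Scrit * Real.log (S1 u)) (fun _ => (0:ℝ)) u v huv
        hV1cont.continuousOn (fun x _ => hV1deriv x) (fun x _ => le_rfl)
      exact le_antisymm h1 h2
    intro u v
    rcases le_total u v with h | h
    · exact (key u v h).symm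
    · exact key v u h
  -- Vx derivative and antitonicity
  have hVxderiv : ∀ x : ℝ, x ∉ {s : ℝ | ¬ ContinuousAt bx.b s} →
      HasDerivAt (fun u => Ix u + Sx u - p.Scrit * Real.log (Sx u))
        (p.γ * Ix x * (bx.b x - 1)) x :=
    fun x hx => traj_hasDerivAt_V hBm hB01 trajx (not_not.mp hx)
  have hVxcont : Continuous (fun u => Ix u + Sx u - p.Scrit * Real.log (Sx u)) :=
    (hIxc.add hSxc).sub (continuous_const.mul (hSxc.log fun t => (hSxpos t).ne'))
  have hVxanti : ∀ u v : ℝ, u ≤ v → Ix v + Sx v - p.Scrit * Real.log (Sx v)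
      ≤ Ix u + Sx u - p.Scrit * Real.log (Sx u) := by
    intro u v huv
    refine ge_of_deriv_nonpos_off_finite hD
      (fun u => Ix u + Sx u - p.Scrit * Real.log (Sx u))
      (fun s => p.γ * Ix s * (bx.b s - 1)) u v huv hVxcont.continuousOn
      (fun x hx => hVxderiv x hx.2) ?_
    intro x _
    show p.γ * Ix x * (bx.b x - 1) ≤ 0
    nlinarith [mul_nonneg (mul_nonneg hγ.le (hIxnn x)) (sub_nonneg.2 (hB01 x).2)]
  have hVxV1 : ∀ t, t ≤ bx.ti → Ix t + Sx t - p.Scrit * Real.log (Sx t)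
      = I1 t + S1 t - p.Scrit * Real.log (S1 t) := by
    intro t ht; rw [(hcoin t ht).1, (hcoin t ht).2]
  have hVxle : ∀ t, Ix t + Sx t - p.Scrit * Real.log (Sx t)
      ≤ I1 bx.ti + S1 bx.ti - p.Scrit * Real.log (S1 bx.ti) := by
    intro t
    rcases le_total t bx.ti with h | h
    · rw [hVxV1 t h]; exact (hV1const t bx.ti).le
    · calc Ix t + Sx t - p.Scrit * Real.log (Sx t)
          ≤ Ix bx.ti + Sx bx.ti - p.Scrit * Real.log (Sx bx.ti) := hVxanti _ _ h
        _ = _ := hVxV1 _ le_rfl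
  -- Ix is positive everywhere
  have hIxpos : ∀ t, 0 < Ix t := by
    intro t
    rcases le_total t bx.ti with h | h
    · rw [(hcoin t h).2]; exact hI1pos t
    · have hd : ∀ x ∈ Ioo bx.ti t \ {s : ℝ | ¬ ContinuousAt bx.b s},
          HasDerivAt (fun u => Ix u * Real.exp (p.γ * u))
            (bx.b x * p.β * Sx x * Ix x * Real.exp (p.γ * x)) x := by
        intro x hx
        have hI' := traj_hasDerivAt_I hBm hB01 trajx (not_not.mp hx.2)
        have hlin : HasDerivAt (fun u : ℝ => p.γ * u) p.γ x := by
          simpa using (hasDerivAt_id x).const_mul p.γ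
        have hexp := hlin.exp
        refine (hI'.mul hexp).congr_deriv ?_
        ring
      have hnn : ∀ x ∈ Ioo bx.ti t \ {s : ℝ | ¬ ContinuousAt bx.b s},
          0 ≤ bx.b x * p.β * Sx x * Ix x * Real.exp (p.γ * x) := fun x _ =>
        mul_nonneg (mul_nonneg (mul_nonneg (mul_nonneg (hB01 x).1 hβ.le)
          (hSxpos x).le) (hIxnn x)) (Real.exp_pos _).le
      have hcontψ : Continuous (fun u => Ix u * Real.exp (p.γ * u)) :=
        hIxc.mul (Real.continuous_exp.comp (continuous_const.mul continuous_id))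
      have key := le_of_deriv_nonneg_off_finite hD (fun u => Ix u * Real.exp (p.γ * u))
        (fun x => bx.b x * p.β * Sx x * Ix x * Real.exp (p.γ * x)) bx.ti t h
        hcontψ.continuousOn hd hnn
      have h0 : 0 < Ix bx.ti * Real.exp (p.γ * bx.ti) := by
        rw [(hcoin bx.ti le_rfl).2]; exact mul_pos (hI1pos _) (Real.exp_pos _)
      have key' : Ix bx.ti * Real.exp (p.γ * bx.ti) ≤ Ix t * Real.exp (p.γ * t) := key
      by_contra hcon
      push_neg at hcon
      nlinarith [key', h0, Real.exp_pos (p.γ * t),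
        mul_nonneg (neg_nonneg.2 hcon) (Real.exp_pos (p.γ * t)).le]
  -- S1 is antitone
  have hS1anti : ∀ u v : ℝ, u ≤ v → S1 v ≤ S1 u := by
    intro u v huv
    refine ge_of_deriv_nonpos_off_finite finite_empty S1
      (fun s => -(nullB s * p.β * S1 s * I1 s)) u v huv hS1c.continuousOn
      (fun x _ => traj_hasDerivAt_S hNm hN01 traj1 (hNc x)) ?_
    intro x _
    show -(nullB x * p.β * S1 x * I1 x) ≤ 0
    have := mul_nonneg (mul_nonneg (mul_nonneg (hN01 x).1 hβ.le) (hS1pos x).le) (hI1pos x).le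
    linarith
  -- before the peak, S1 stays above Scrit
  have hScritle : ∀ t, t ≤ tmax → p.Scrit ≤ S1 t := by
    by_contra hcon; push_neg at hcon
    obtain ⟨t0, ht0max, ht0⟩ := hcon
    obtain ⟨u, hu_lt, hu⟩ : ∃ u, u < tmax ∧ S1 u < p.Scrit := by
      rcases lt_or_eq_of_le ht0max with h' | h'
      · exact ⟨t0, h', ht0⟩
      · subst h'
        have hev : ∀ᶠ s in nhds t0, S1 s < p.Scrit := by
          have := hS1c.continuousAt (x := t0) (Iio_mem_nhds ht0)
          filter_upwards [this] with s hs using hs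
        have hev2 := (hev.filter_mono (nhdsWithin_le_nhds (s := Iio t0))).and
          (eventually_mem_nhdsWithin (a := t0) (s := Iio t0))
        obtain ⟨u, hu1, hu2⟩ := hev2.exists
        exact ⟨u, hu2, hu1⟩
    have hanti2 : StrictAntiOn I1 (Icc u tmax) := by
      refine strictAntiOn_of_deriv_neg (convex_Icc u tmax) hI1c.continuousOn ?_
      intro x hx
      rw [interior_Icc] at hx
      rw [(traj_hasDerivAt_I hNm hN01 traj1 (hNc x)).deriv]
      have hS1x : S1 x ≤ S1 u := hS1anti u x hx.1.le
      have hgl : p.β * S1 x < p.γ := by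
        have h5 : p.β * S1 x < p.β * p.Scrit :=
          mul_lt_mul_of_pos_left (lt_of_le_of_lt hS1x hu) hβ
        calc p.β * S1 x < p.β * p.Scrit := h5
          _ = p.γ := by rw [SIRParams.Scrit]; field_simp
      have hI1x := hI1pos x
      have h6 := mul_lt_mul_of_pos_right hgl hI1x
      simp only [nullB, one_mul]
      linarith
    have hlt : I1 tmax < I1 u := hanti2 ⟨le_rfl, hu_lt.le⟩ ⟨hu_lt.le, le_rfl⟩ hu_lt
    have hle : I1 u ≤ sSup (Set.range I1) := by
      refine le_csSup ⟨1, ?_⟩ ⟨u, rfl⟩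
      rintro y ⟨s, rfl⟩
      exact traj_I_le_one traj1 s
    rw [← hmax] at hle; linarith
  -- key pointwise inequality
  have hKPI : ∀ s, Ix s - I1 s
      ≤ (1 + p.Scrit) * |Real.log (Sx s) - Real.log (S1 s)| := by
    intro s
    have h1 := hVxle s
    have h2 := hV1const s bx.ti
    have habs : |S1 s - Sx s| ≤ |Real.log (S1 s) - Real.log (Sx s)| :=
      abs_sub_le_abs_log (hS1pos s) (hS1le1 s) (hSxpos s) (hSxle1 s)
    rw [abs_sub_comm (S1 s), abs_sub_comm (Real.log (S1 s))] at habs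
    have h3 : p.Scrit * (Real.log (Sx s) - Real.log (S1 s))
        ≤ p.Scrit * |Real.log (Sx s) - Real.log (S1 s)| :=
      mul_le_mul_of_nonneg_left (le_abs_self _) hcpos.le
    rw [mul_sub] at h3
    have h5 : (1 + p.Scrit) * |Real.log (Sx s) - Real.log (S1 s)|
        = |Real.log (Sx s) - Real.log (S1 s)|
          + p.Scrit * |Real.log (Sx s) - Real.log (S1 s)| := by ring
    have hneg1 : -(Sx s - S1 s) ≤ |Sx s - S1 s| := neg_le_abs _
    linarith
  -- log Sx ≥ log S1 everywhere
  have hDl : ∀ t : ℝ, 0 ≤ Real.log (Sx t) - Real.log (S1 t) := by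
    by_contra hcon; push_neg at hcon
    obtain ⟨t1, ht1⟩ := hcon
    have hDl0 : ∀ s, s ≤ bx.ti → Real.log (Sx s) - Real.log (S1 s) = 0 := by
      intro s hs; rw [(hcoin s hs).1]; ring
    have hti1 : bx.ti < t1 := by
      by_contra h; push_neg at h; rw [hDl0 t1 h] at ht1; linarith
    have hDlc : Continuous (fun s => Real.log (Sx s) - Real.log (S1 s)) :=
      (hSxc.log fun t => (hSxpos t).ne').sub (hS1c.log fun t => (hS1pos t).ne')
    set A := {s | s ∈ Icc bx.ti t1 ∧ 0 ≤ Real.log (Sx s) - Real.log (S1 s)} with hA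
    have hAcl : IsClosed A := by
      have hAeq : A = Icc bx.ti t1 ∩
          (fun s => Real.log (Sx s) - Real.log (S1 s)) ⁻¹' (Ici 0) := rfl
      rw [hAeq]; exact isClosed_Icc.inter (isClosed_Ici.preimage hDlc)
    have hAne : A.Nonempty :=
      ⟨bx.ti, ⟨left_mem_Icc.2 hti1.le, by rw [hDl0 bx.ti le_rfl]⟩⟩
    have hAbdd : BddAbove A := ⟨t1, fun s hs => hs.1.2⟩
    have htsA := hAcl.csSup_mem hAne hAbdd
    have hts1 : sSup A < t1 := by
      rcases lt_or_eq_of_le htsA.1.2 with h | h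
      · exact h
      · exfalso; rw [h] at htsA; linarith [htsA.2]
    have hneg : ∀ s, sSup A < s → s ≤ t1 → Real.log (Sx s) - Real.log (S1 s) < 0 := by
      intro s h1 h2
      by_contra h; push_neg at h
      have hsA : s ∈ A := ⟨⟨htsA.1.1.trans h1.le, h2⟩, h⟩
      exact absurd (le_csSup hAbdd hsA) (not_le.2 h1)
    have hts0 : Real.log (Sx (sSup A)) - Real.log (S1 (sSup A)) = 0 := by
      refine le_antisymm ?_ htsA.2
      have htend : Filter.Tendsto (fun s => Real.log (Sx s) - Real.log (S1 s))
          (nhdsWithin (sSup A) (Ioi (sSup A)))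
          (nhds (Real.log (Sx (sSup A)) - Real.log (S1 (sSup A)))) :=
        (hDlc.continuousAt).tendsto.mono_left nhdsWithin_le_nhds
      refine le_of_tendsto htend ?_
      filter_upwards [Ioc_mem_nhdsGT hts1] with s hs using (hneg s hs.1 hs.2).le
    have hec : Continuous (fun s : ℝ => Real.exp (-(p.β * (1 + p.Scrit)) * s)) :=
      Real.continuous_exp.comp (continuous_const.mul continuous_id)
    have hd : ∀ x ∈ Ioo (sSup A) t1 \ {s : ℝ | ¬ ContinuousAt bx.b s},
        HasDerivAt (fun s => (Real.log (Sx s) - Real.log (S1 s))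
            * Real.exp (-(p.β * (1 + p.Scrit)) * s))
          ((p.β * (I1 x - bx.b x * Ix x)
              - p.β * (1 + p.Scrit) * (Real.log (Sx x) - Real.log (S1 x)))
            * Real.exp (-(p.β * (1 + p.Scrit)) * x)) x := by
      intro x hx
      have hdx := traj_hasDerivAt_logS hBm hB01 trajx (not_not.mp hx.2)
      have hd1 := traj_hasDerivAt_logS hNm hN01 traj1 (hNc x)
      have hlin : HasDerivAt (fun u : ℝ => -(p.β * (1 + p.Scrit)) * u)
          (-(p.β * (1 + p.Scrit))) x := by
        simpa using (hasDerivAt_id x).const_mul (-(p.β * (1 + p.Scrit)))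
      have hexp := hlin.exp
      refine ((hdx.sub hd1).mul hexp).congr_deriv ?_
      simp only [nullB, Pi.sub_apply]
      ring
    have hnn : ∀ x ∈ Ioo (sSup A) t1 \ {s : ℝ | ¬ ContinuousAt bx.b s},
        0 ≤ (p.β * (I1 x - bx.b x * Ix x)
            - p.β * (1 + p.Scrit) * (Real.log (Sx x) - Real.log (S1 x)))
          * Real.exp (-(p.β * (1 + p.Scrit)) * x) := by
      intro x hx
      have hDlx : Real.log (Sx x) - Real.log (S1 x) < 0 := hneg x hx.1.1 hx.1.2.le
      have hK := hKPI x
      rw [abs_of_neg hDlx] at hK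
      have hb2 : bx.b x * Ix x ≤ Ix x := mul_le_of_le_one_left (hIxnn x) (hB01 x).2
      refine mul_nonneg ?_ (Real.exp_pos _).le
      have h6 : (1 + p.Scrit) * -(Real.log (Sx x) - Real.log (S1 x))
          = -((1 + p.Scrit) * (Real.log (Sx x) - Real.log (S1 x))) := by ring
      rw [h6] at hK
      have h7 : p.β * ((1 + p.Scrit) * (Real.log (Sx x) - Real.log (S1 x)))
          ≤ p.β * (I1 x - bx.b x * Ix x) := by
        refine mul_le_mul_of_nonneg_left ?_ hβ.le
        linarith
      have h8 : p.β * ((1 + p.Scrit) * (Real.log (Sx x) - Real.log (S1 x)))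
          = p.β * (1 + p.Scrit) * (Real.log (Sx x) - Real.log (S1 x)) :=
        (mul_assoc _ _ _).symm
      linarith
    have hkey := le_of_deriv_nonneg_off_finite hD
      (fun s => (Real.log (Sx s) - Real.log (S1 s))
        * Real.exp (-(p.β * (1 + p.Scrit)) * s))
      (fun x => (p.β * (I1 x - bx.b x * Ix x)
          - p.β * (1 + p.Scrit) * (Real.log (Sx x) - Real.log (S1 x)))
        * Real.exp (-(p.β * (1 + p.Scrit)) * x)) (sSup A) t1 hts1.le
      (hDlc.mul hec).continuousOn hd hnn
    have hkey' : (Real.log (Sx (sSup A)) - Real.log (S1 (sSup A)))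
        * Real.exp (-(p.β * (1 + p.Scrit)) * (sSup A))
        ≤ (Real.log (Sx t1) - Real.log (S1 t1))
          * Real.exp (-(p.β * (1 + p.Scrit)) * t1) := hkey
    rw [hts0, zero_mul] at hkey'
    have hlt : (Real.log (Sx t1) - Real.log (S1 t1))
        * Real.exp (-(p.β * (1 + p.Scrit)) * t1) < 0 :=
      mul_neg_of_neg_of_pos ht1 (Real.exp_pos _)
    linarith [hkey', hlt]
  have hSxge : ∀ t, S1 t ≤ Sx t := fun t =>
    (Real.log_le_log_iff (hS1pos t) (hSxpos t)).1 (by linarith [hDl t])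
  -- strict drop of Vx across [tb - ε, tb]
  have hf0m : Measurable (fun s => 1 - bx.b s) := measurable_const.sub hBm
  have hf0int : ∀ u v : ℝ, IntervalIntegrable (fun s => 1 - bx.b s) volume u v := by
    intro u v
    refine intervalIntegrable_of_bdd (C := 1) hf0m fun s => ?_
    have h1 := (hB01 s).1; have h2 := (hB01 s).2
    rw [abs_le]; constructor <;> linarith
  obtain ⟨z, hzmem, hzmin⟩ := isCompact_Icc.exists_isMinOn
    (nonempty_Icc.2 (by linarith : tb - ε ≤ tb)) hIxc.continuousOn
  have hmpos : 0 < Ix z := hIxpos z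
  have hmle : ∀ s, s ∈ Icc (tb - ε) tb → Ix z ≤ Ix s := fun s hs => hzmin hs
  have hJpos : 0 < ∫ s in (tb - ε)..tb, (1 - bx.b s) := by
    rw [intervalIntegral.integral_pos_iff_support_of_nonneg_ae
      (Filter.Eventually.of_forall (fun s => (by linarith [(hB01 s).2] : (0:ℝ) ≤ 1 - bx.b s))) (hf0int _ _)]
    refine ⟨by linarith, ?_⟩
    have hN : MeasureTheory.volume
        {t : ℝ | ¬ (t ∈ Icc (tb - ε) (tb + ε) → bx.b t < 1)} = 0 := ae_iff.mp hae
    have hsub : Ioc (tb - ε) tb ⊆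
        (Function.support (fun s => 1 - bx.b s) ∩ Ioc (tb - ε) tb)
        ∪ {t : ℝ | ¬ (t ∈ Icc (tb - ε) (tb + ε) → bx.b t < 1)} := by
      intro s hs
      by_cases hP : s ∈ Icc (tb - ε) (tb + ε) → bx.b s < 1
      · left
        refine ⟨?_, hs⟩
        have hsI : s ∈ Icc (tb - ε) (tb + ε) := ⟨hs.1.le, hs.2.trans (by linarith)⟩
        have hblt := hP hsI
        simp only [Function.mem_support]
        intro h0
        linarith
      · right; exact hP
    have hstep : (0:ENNReal) < MeasureTheory.volume
        (Function.support (fun s => 1 - bx.b s) ∩ Ioc (tb - ε) tb) := by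
      have hcalc : ENNReal.ofReal ε
          ≤ MeasureTheory.volume
            (Function.support (fun s => 1 - bx.b s) ∩ Ioc (tb - ε) tb) := by
        calc ENNReal.ofReal ε = MeasureTheory.volume (Ioc (tb - ε) tb) := by
              rw [Real.volume_Ioc]; congr 1; ring
          _ ≤ MeasureTheory.volume
              ((Function.support (fun s => 1 - bx.b s) ∩ Ioc (tb - ε) tb)
                ∪ {t : ℝ | ¬ (t ∈ Icc (tb - ε) (tb + ε) → bx.b t < 1)}) :=
            measure_mono hsub
          _ ≤ MeasureTheory.volume
              (Function.support (fun s => 1 - bx.b s) ∩ Ioc (tb - ε) tb)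
              + MeasureTheory.volume
                {t : ℝ | ¬ (t ∈ Icc (tb - ε) (tb + ε) → bx.b t < 1)} :=
            measure_union_le _ _
          _ = MeasureTheory.volume
              (Function.support (fun s => 1 - bx.b s) ∩ Ioc (tb - ε) tb) := by
            rw [hN, add_zero]
      exact lt_of_lt_of_le (ENNReal.ofReal_pos.2 hε) hcalc
    exact hstep
  have hWcont : Continuous (fun u => (Ix u + Sx u - p.Scrit * Real.log (Sx u))
      + p.γ * Ix z * ∫ s in (tb - ε)..u, (1 - bx.b s)) :=
    hVxcont.add (continuous_const.mul (intervalIntegral.continuous_primitive hf0int _))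
  have hWderiv : ∀ x ∈ Ioo (tb - ε) tb \ {s : ℝ | ¬ ContinuousAt bx.b s},
      HasDerivAt (fun u => (Ix u + Sx u - p.Scrit * Real.log (Sx u))
          + p.γ * Ix z * ∫ s in (tb - ε)..u, (1 - bx.b s))
        (p.γ * Ix x * (bx.b x - 1) + p.γ * Ix z * (1 - bx.b x)) x := by
    intro x hx
    have h1 := hVxderiv x hx.2
    have h2 : HasDerivAt (fun u => ∫ s in (tb - ε)..u, (1 - bx.b s)) (1 - bx.b x) x :=
      intervalIntegral.integral_hasDerivAt_right (hf0int _ _)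
        ⟨Set.univ, univ_mem, hf0m.aestronglyMeasurable.restrict⟩
        (continuousAt_const.sub (not_not.mp hx.2))
    exact h1.add (h2.const_mul (p.γ * Ix z))
  have hWnonpos : ∀ x ∈ Ioo (tb - ε) tb \ {s : ℝ | ¬ ContinuousAt bx.b s},
      p.γ * Ix x * (bx.b x - 1) + p.γ * Ix z * (1 - bx.b x) ≤ 0 := by
    intro x hx
    have h1b : 0 ≤ 1 - bx.b x := by linarith [(hB01 x).2]
    have hIm : Ix z ≤ Ix x := hmle x ⟨hx.1.1.le, hx.1.2.le⟩
    nlinarith [mul_nonneg (mul_nonneg hγ.le h1b) (sub_nonneg.2 hIm)]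
  have hdrop := ge_of_deriv_nonpos_off_finite hD
    (fun u => (Ix u + Sx u - p.Scrit * Real.log (Sx u))
      + p.γ * Ix z * ∫ s in (tb - ε)..u, (1 - bx.b s))
    (fun x => p.γ * Ix x * (bx.b x - 1) + p.γ * Ix z * (1 - bx.b x))
    (tb - ε) tb (by linarith) hWcont.continuousOn hWderiv hWnonpos
  have hdrop' : (Ix tb + Sx tb - p.Scrit * Real.log (Sx tb))
      + p.γ * Ix z * ∫ s in (tb - ε)..tb, (1 - bx.b s)
      ≤ (Ix (tb - ε) + Sx (tb - ε) - p.Scrit * Real.log (Sx (tb - ε)))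
        + p.γ * Ix z * ∫ s in (tb - ε)..(tb - ε), (1 - bx.b s) := hdrop
  rw [intervalIntegral.integral_same, mul_zero, add_zero] at hdrop'
  have hprod : 0 < p.γ * Ix z * ∫ s in (tb - ε)..tb, (1 - bx.b s) :=
    mul_pos (mul_pos hγ hmpos) hJpos
  have hVxa := hVxle (tb - ε)
  have hVxtb : Ix tb + Sx tb - p.Scrit * Real.log (Sx tb)
      < I1 bx.ti + S1 bx.ti - p.Scrit * Real.log (S1 bx.ti) := by linarith
  -- conclusion
  intro t ht
  have h1 := hVxanti tb t ht.1
  have h2 := hScritle t ht.2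
  have h3 := hSxge t
  have hdiv : Real.log (Sx t) - Real.log (S1 t) ≤ (Sx t - S1 t) / S1 t := by
    have h := Real.log_le_sub_one_of_pos (div_pos (hSxpos t) (hS1pos t))
    rw [Real.log_div (hSxpos t).ne' (hS1pos t).ne'] at h
    have he : (Sx t - S1 t) / S1 t = Sx t / S1 t - 1 := by
      rw [sub_div, div_self (hS1pos t).ne']
    rw [← he] at h
    exact h
  have hchord : p.Scrit * Real.log (Sx t) - p.Scrit * Real.log (S1 t) ≤ Sx t - S1 t := by
    have e1 : p.Scrit * (Real.log (Sx t) - Real.log (S1 t))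
        ≤ S1 t * (Real.log (Sx t) - Real.log (S1 t)) :=
      mul_le_mul_of_nonneg_right h2 (by linarith [hDl t])
    have e2 : S1 t * (Real.log (Sx t) - Real.log (S1 t))
        ≤ S1 t * ((Sx t - S1 t) / S1 t) :=
      mul_le_mul_of_nonneg_left hdiv (hS1pos t).le
    have e3 : S1 t * ((Sx t - S1 t) / S1 t) = Sx t - S1 t := by
      rw [mul_comm]
      exact div_mul_cancel₀ _ (hS1pos t).ne'
    have e4 : p.Scrit * (Real.log (Sx t) - Real.log (S1 t))
        = p.Scrit * Real.log (Sx t) - p.Scrit * Real.log (S1 t) := by ring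
    linarith
  have hVconst := hV1const t bx.ti
  linarith
end
end

section
/- (State at the end of a maintain–suppress intervention.) Let b be a maintain–suppress intervention with start time t_i, duration τ, and maintenance fraction f ∈ [0,1], with controlled trajectory (S_b, I_b). Then: (i) I_b(t) = I_b(t_i) and S_b(t) = S_b(t_i) − γ·I_b(t_i)·(t − t_i) for all t ∈ [t_i, t_i + fτ]; (ii) S_b(t_i + τ) = S_b(t_i) − γ·τ·f·I_b(t_i); and (iii) I_b(t_i + τ) = I_b(t_i)·exp(−γ·τ·(1 − f)). -/
noncomputable section

/-- State at the end of a maintain–suppress intervention. -/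
theorem maintain_suppress_endpoint (p : SIRParams) (S1 I1 : ℝ → ℝ)
    (href : IsReference p S1 I1)
    (bi : Intervention p) (f : ℝ) (Sb Ib : ℝ → ℝ)
    (hc : IsControlled p S1 I1 bi Sb Ib)
    (hms : IsMaintainSuppress p bi f Sb) :
    (∀ t ∈ Set.Icc bi.ti (bi.ti + f * bi.τ),
      Ib t = Ib bi.ti ∧ Sb t = Sb bi.ti - p.γ * Ib bi.ti * (t - bi.ti)) ∧
    Sb (bi.ti + bi.τ) = Sb bi.ti - p.γ * bi.τ * f * Ib bi.ti ∧
    Ib (bi.ti + bi.τ) = Ib bi.ti * Real.exp (-p.γ * bi.τ * (1 - f)) := by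
  obtain ⟨htraj, -⟩ := hc
  obtain ⟨⟨hf0, hf1⟩, hmaint, hsupp⟩ := hms
  have hβ0 : 0 < p.β := p.hγ.trans p.hβγ
  have hIb : Continuous Ib := continuousOn_univ.mp htraj.contI
  have hSpos : ∀ s, 0 < Sb s := fun s => htraj.Spos s trivial
  have hτ := bi.hτ
  have hti_le : bi.ti ≤ bi.ti + f * bi.τ := by nlinarith
  have hft : bi.ti + f * bi.τ ≤ bi.ti + bi.τ := by nlinarith
  -- maintenance phase: I is constant
  have hIconst : ∀ s ∈ Set.Icc bi.ti (bi.ti + f * bi.τ), Ib s = Ib bi.ti := by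
    rintro s ⟨hs1, hs2⟩
    have heq := htraj.I_eq bi.ti trivial s trivial hs1
    have hint : (∫ u in bi.ti..s, (bi.b u * p.β * Sb u * Ib u - p.γ * Ib u))
        = ∫ u in bi.ti..s, (0 : ℝ) := by
      apply intervalIntegral.integral_congr_ae
      rw [MeasureTheory.ae_iff]
      refine MeasureTheory.measure_mono_null (fun u hu => ?_) (MeasureTheory.measure_singleton s)
      simp only [Set.mem_setOf_eq, _root_.not_imp, Set.uIoc_of_le hs1, Set.mem_Ioc] at hu
      obtain ⟨⟨hu1, hu2⟩, hne⟩ := hu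
      by_contra hus
      have hult : u < s := lt_of_le_of_ne hu2 (by simpa using hus)
      have hb : bi.b u = p.γ / (p.β * Sb u) :=
        hmaint u ⟨hu1.le, lt_of_lt_of_le hult hs2⟩
      apply hne
      rw [hb]
      have h1 : Sb u ≠ 0 := (hSpos u).ne'
      field_simp
      ring
    rw [heq, hint]
    simp
  -- maintenance phase: S is linear
  have hSlin : ∀ t ∈ Set.Icc bi.ti (bi.ti + f * bi.τ),
      Sb t = Sb bi.ti - p.γ * Ib bi.ti * (t - bi.ti) := by
    rintro t ⟨ht1, ht2⟩
    have heq := htraj.S_eq bi.ti trivial t trivial ht1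
    have hint : (∫ u in bi.ti..t, bi.b u * p.β * Sb u * Ib u)
        = ∫ u in bi.ti..t, (p.γ * Ib bi.ti) := by
      apply intervalIntegral.integral_congr_ae
      rw [MeasureTheory.ae_iff]
      refine MeasureTheory.measure_mono_null (fun u hu => ?_) (MeasureTheory.measure_singleton t)
      simp only [Set.mem_setOf_eq, _root_.not_imp, Set.uIoc_of_le ht1, Set.mem_Ioc] at hu
      obtain ⟨⟨hu1, hu2⟩, hne⟩ := hu
      by_contra hut
      have hult : u < t := lt_of_le_of_ne hu2 (by simpa using hut)
      have humem : u ∈ Set.Icc bi.ti (bi.ti + f * bi.τ) := ⟨hu1.le, hu2.trans ht2⟩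
      have hb : bi.b u = p.γ / (p.β * Sb u) :=
        hmaint u ⟨hu1.le, lt_of_lt_of_le hult ht2⟩
      apply hne
      rw [hb, hIconst u humem]
      have h1 : Sb u ≠ 0 := (hSpos u).ne'
      field_simp
    rw [heq, hint, intervalIntegral.integral_const, smul_eq_mul]
    ring
  have hmem0 : bi.ti + f * bi.τ ∈ Set.Icc bi.ti (bi.ti + f * bi.τ) := ⟨hti_le, le_refl _⟩
  set t0 := bi.ti + f * bi.τ with ht0def
  set t1 := bi.ti + bi.τ with ht1def
  -- suppression phase: S is constant
  have hS2 : Sb t1 = Sb t0 := by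
    have heq := htraj.S_eq t0 trivial t1 trivial hft
    have hint : (∫ u in t0..t1, bi.b u * p.β * Sb u * Ib u) = ∫ u in t0..t1, (0 : ℝ) := by
      apply intervalIntegral.integral_congr
      intro u hu
      rw [Set.uIcc_of_le hft] at hu
      simp [hsupp u hu]
    rw [heq, hint]
    simp
  -- suppression phase: key integral identity for I
  have hkey : ∀ x ∈ Set.Icc t0 t1, Ib x = Ib t0 - p.γ * ∫ u in t0..x, Ib u := by
    rintro x ⟨hx1, hx2⟩
    have heq := htraj.I_eq t0 trivial x trivial hx1
    have hint : (∫ u in t0..x, (bi.b u * p.β * Sb u * Ib u - p.γ * Ib u))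
        = ∫ u in t0..x, (-p.γ) * Ib u := by
      apply intervalIntegral.integral_congr
      intro u hu
      rw [Set.uIcc_of_le hx1] at hu
      simp only [hsupp u ⟨hu.1, hu.2.trans hx2⟩]
      ring
    rw [heq, hint, intervalIntegral.integral_const_mul]
    ring
  -- solve the ODE I' = -γ I on the suppression phase
  have hF : ∀ x : ℝ, HasDerivAt (fun u => ∫ v in t0..u, Ib v) (Ib x) x := fun x =>
    intervalIntegral.integral_hasDerivAt_right (hIb.intervalIntegrable _ _)
      (hIb.stronglyMeasurableAtFilter _ _) hIb.continuousAt
  set g : ℝ → ℝ := fun x => (Ib t0 - p.γ * ∫ v in t0..x, Ib v) * Real.exp (p.γ * x) with hgdef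
  have hg : ∀ x : ℝ, HasDerivAt g
      ((-(p.γ * Ib x)) * Real.exp (p.γ * x)
        + (Ib t0 - p.γ * ∫ v in t0..x, Ib v) * (Real.exp (p.γ * x) * p.γ)) x := by
    intro x
    have h1 : HasDerivAt (fun u => Ib t0 - p.γ * ∫ v in t0..u, Ib v) (-(p.γ * Ib x)) x := by
      exact ((hasDerivAt_const x (Ib t0)).sub ((hF x).const_mul p.γ)).congr_deriv (by simp)
    have h2 : HasDerivAt (fun u => Real.exp (p.γ * u)) (Real.exp (p.γ * x) * p.γ) x := by
      exact ((Real.hasDerivAt_exp (p.γ * x)).comp x ((hasDerivAt_id x).const_mul p.γ)).congr_deriv (by simp)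
    exact h1.mul h2
  have hconst := constant_of_has_deriv_right_zero (f := g) (a := t0) (b := t1)
    (fun x _ => ((hg x).continuousAt).continuousWithinAt)
    (fun x hx => by
      have hx' : x ∈ Set.Icc t0 t1 := ⟨hx.1, hx.2.le⟩
      have h0 : (-(p.γ * Ib x)) * Real.exp (p.γ * x)
          + (Ib t0 - p.γ * ∫ v in t0..x, Ib v) * (Real.exp (p.γ * x) * p.γ) = 0 := by
        rw [← hkey x hx']
        ring
      exact (h0 ▸ (hg x).hasDerivWithinAt))
  have hgeq : g t1 = g t0 := hconst t1 ⟨hft, le_refl _⟩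
  have hg1 : g t1 = Ib t1 * Real.exp (p.γ * t1) := by
    rw [hgdef]
    simp only
    rw [← hkey t1 ⟨hft, le_refl _⟩]
  have hg0 : g t0 = Ib t0 * Real.exp (p.γ * t0) := by
    rw [hgdef]
    simp [intervalIntegral.integral_same]
  have hIt0 : Ib t0 = Ib bi.ti := hIconst t0 hmem0
  refine ⟨fun t ht => ⟨hIconst t ht, hSlin t ht⟩, ?_, ?_⟩
  · rw [hS2, hSlin t0 hmem0]
    ring
  · rw [hg1, hg0, hIt0] at hgeq
    have hexp : Real.exp (-p.γ * bi.τ * (1 - f)) * Real.exp (p.γ * t1)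
        = Real.exp (p.γ * t0) := by
      rw [← Real.exp_add]
      congr 1
      rw [ht0def, ht1def]
      ring
    have hne : Real.exp (p.γ * t1) ≠ 0 := Real.exp_ne_zero _
    have : Ib t1 * Real.exp (p.γ * t1)
        = (Ib bi.ti * Real.exp (-p.γ * bi.τ * (1 - f))) * Real.exp (p.γ * t1) := by
      rw [mul_assoc, hexp, hgeq]
    exact mul_right_cancel₀ hne this
end
end

section
/- (Don't be late.) Let b* be an optimal intervention of duration τ with start time t_i. Then the global peak of the controlled trajectory cannot occur strictly before the intervention begins: I_{b*}(t) < Imax(b*) for all t < t_i. Consequently, S_{b*}(t_i) > Scrit. -/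
noncomputable section

open Set Filter MeasureTheory intervalIntegral Real Topology

namespace DBL

lemma beta_pos (p : SIRParams) : 0 < p.β := lt_trans p.hγ p.hβγ
lemma Scrit_pos (p : SIRParams) : 0 < p.Scrit := div_pos p.hγ (beta_pos p)
lemma Scrit_lt_one (p : SIRParams) : p.Scrit < 1 := (div_lt_one (beta_pos p)).2 p.hβγ
lemma Scrit_mul_beta (p : SIRParams) : p.Scrit * p.β = p.γ :=
  div_mul_cancel₀ _ (ne_of_gt (beta_pos p))

def hfun (p : SIRParams) (s : ℝ) : ℝ := s - p.Scrit * Real.log s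
def Mval (p : SIRParams) : ℝ := 1 - hfun p p.Scrit

lemma hfun_hasDeriv (p : SIRParams) {s : ℝ} (hs : s ≠ 0) :
    HasDerivAt (hfun p) (1 - p.Scrit * s⁻¹) s :=
  (hasDerivAt_id s).sub ((Real.hasDerivAt_log hs).const_mul p.Scrit)

lemma hfun_contOn (p : SIRParams) : ContinuousOn (hfun p) (Ioi 0) := by
  intro x hx
  exact ((hfun_hasDeriv p (ne_of_gt hx)).continuousAt).continuousWithinAt

lemma hfun_strictMonoOn (p : SIRParams) : StrictMonoOn (hfun p) (Ici p.Scrit) := by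
  apply strictMonoOn_of_deriv_pos (convex_Ici _)
  · exact (hfun_contOn p).mono fun x hx => lt_of_lt_of_le (Scrit_pos p) hx
  · intro x hx
    rw [interior_Ici] at hx
    have hx0 : (0:ℝ) < x := lt_trans (Scrit_pos p) hx
    rw [(hfun_hasDeriv p (ne_of_gt hx0)).deriv]
    have : p.Scrit * x⁻¹ < 1 := by
      rw [mul_inv_lt_iff₀ hx0, one_mul]; exact hx
    linarith

lemma hfun_strictAntiOn (p : SIRParams) : StrictAntiOn (hfun p) (Ioc 0 p.Scrit) := by
  apply strictAntiOn_of_deriv_neg (convex_Ioc _ _)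
  · exact (hfun_contOn p).mono fun x hx => hx.1
  · intro x hx
    rw [interior_Ioc] at hx
    rw [(hfun_hasDeriv p (ne_of_gt hx.1)).deriv]
    have : 1 < p.Scrit * x⁻¹ := by
      rw [lt_mul_inv_iff₀ hx.1, one_mul]; exact hx.2
    linarith

lemma hfun_ge (p : SIRParams) {s : ℝ} (hs : 0 < s) : hfun p p.Scrit ≤ hfun p s := by
  rcases le_or_gt s p.Scrit with h | h
  · rcases eq_or_lt_of_le h with rfl | h'
    · exact le_refl _
    · exact le_of_lt (hfun_strictAntiOn p ⟨hs, h⟩ ⟨Scrit_pos p, le_refl _⟩ h')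
  · exact le_of_lt (hfun_strictMonoOn p (self_mem_Ici) (le_of_lt h) h)

variable {p : SIRParams}

lemma traj_contS {b : ℝ → ℝ} {S I : ℝ → ℝ} (h : IsSIRTrajectory p b Set.univ S I) :
    Continuous S := continuousOn_univ.mp h.contS

lemma traj_contI {b : ℝ → ℝ} {S I : ℝ → ℝ} (h : IsSIRTrajectory p b Set.univ S I) :
    Continuous I := continuousOn_univ.mp h.contI

lemma traj_I_le_one {b : ℝ → ℝ} {S I : ℝ → ℝ} (h : IsSIRTrajectory p b Set.univ S I)
    (t : ℝ) : I t ≤ 1 := by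
  have h1 := h.sum_le_one t (mem_univ t)
  have h2 := h.Spos t (mem_univ t)
  linarith

/-- Derivative of the reference (uncontrolled) trajectory. -/
lemma ref_hasDerivAt {S I : ℝ → ℝ} (h : IsSIRTrajectory p nullB Set.univ S I) (t : ℝ) :
    HasDerivAt S (-(p.β * S t * I t)) t ∧ HasDerivAt I (p.β * S t * I t - p.γ * I t) t := by
  have hSc : Continuous S := traj_contS h
  have hIc : Continuous I := traj_contI h
  have hbc : Continuous nullB := continuous_const
  have hfc : Continuous (fun s => nullB s * p.β * S s * I s) :=
    ((hbc.mul continuous_const).mul hSc).mul hIc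
  have hgc : Continuous (fun s => nullB s * p.β * S s * I s - p.γ * I s) :=
    hfc.sub (continuous_const.mul hIc)
  have hmem : Ioi (t - 1) ∈ 𝓝 t := Ioi_mem_nhds (by linarith)
  have hft : nullB t * p.β * S t * I t = p.β * S t * I t := by simp [nullB]
  constructor
  · have hG : HasDerivAt (fun u => ∫ s in (t-1)..u, nullB s * p.β * S s * I s)
        (nullB t * p.β * S t * I t) t :=
      intervalIntegral.integral_hasDerivAt_right (hfc.intervalIntegrable _ _)
        (hfc.stronglyMeasurableAtFilter _ _) hfc.continuousAt
    have hφ : HasDerivAt (fun u => S (t-1) - ∫ s in (t-1)..u, nullB s * p.β * S s * I s)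
        (-(nullB t * p.β * S t * I t)) t := hG.const_sub _
    have heq : S =ᶠ[𝓝 t] fun u => S (t-1) - ∫ s in (t-1)..u, nullB s * p.β * S s * I s :=
      Filter.eventuallyEq_of_mem hmem fun u hu =>
        h.S_eq (t-1) (mem_univ _) u (mem_univ _) (le_of_lt hu)
    have := hφ.congr_of_eventuallyEq heq
    rwa [hft] at this
  · have hG : HasDerivAt (fun u => ∫ s in (t-1)..u, (nullB s * p.β * S s * I s - p.γ * I s))
        (nullB t * p.β * S t * I t - p.γ * I t) t :=
      intervalIntegral.integral_hasDerivAt_right (hgc.intervalIntegrable _ _)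
        (hgc.stronglyMeasurableAtFilter _ _) hgc.continuousAt
    have hφ : HasDerivAt (fun u => I (t-1) + ∫ s in (t-1)..u, (nullB s * p.β * S s * I s - p.γ * I s))
        (nullB t * p.β * S t * I t - p.γ * I t) t := hG.const_add _
    have heq : I =ᶠ[𝓝 t] fun u => I (t-1) + ∫ s in (t-1)..u, (nullB s * p.β * S s * I s - p.γ * I s) :=
      Filter.eventuallyEq_of_mem hmem fun u hu =>
        h.I_eq (t-1) (mem_univ _) u (mem_univ _) (le_of_lt hu)
    have := hφ.congr_of_eventuallyEq heq
    rwa [hft] at this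


variable {S1 I1 : ℝ → ℝ}

lemma ref_energy (href : IsReference p S1 I1) (t : ℝ) : I1 t + hfun p (S1 t) = 1 := by
  obtain ⟨htraj, hIpos, hSlim, hIlim⟩ := href
  set V : ℝ → ℝ := fun u => I1 u + (S1 u - p.Scrit * Real.log (S1 u)) with hV
  have hS1pos : ∀ u, 0 < S1 u := fun u => htraj.Spos u (mem_univ u)
  have hVderiv : ∀ u, HasDerivAt V 0 u := by
    intro u
    have hS := (ref_hasDerivAt htraj u).1
    have hI := (ref_hasDerivAt htraj u).2
    have hlog : HasDerivAt (fun x => Real.log (S1 x)) ((S1 u)⁻¹ * -(p.β * S1 u * I1 u)) u :=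
      (Real.hasDerivAt_log (ne_of_gt (hS1pos u))).comp u hS
    have hcomb := hI.add (hS.sub (hlog.const_mul p.Scrit))
    have hval : p.β * S1 u * I1 u - p.γ * I1 u +
        (-(p.β * S1 u * I1 u) - p.Scrit * ((S1 u)⁻¹ * -(p.β * S1 u * I1 u))) = 0 := by
      have hb := Scrit_mul_beta p
      have hne : S1 u ≠ 0 := ne_of_gt (hS1pos u)
      rw [← hb]
      field_simp
      ring
    rwa [hval] at hcomb
  have hconst : ∀ x y, V x = V y :=
    is_const_of_deriv_eq_zero (fun u => (hVderiv u).differentiableAt)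
      (fun u => (hVderiv u).deriv)
  have hlim : Tendsto V atBot (𝓝 (0 + (1 - p.Scrit * Real.log 1))) := by
    apply hIlim.add
    apply hSlim.sub
    exact (((Real.continuousAt_log one_ne_zero).tendsto).comp hSlim).const_mul p.Scrit
  have hlim2 : Tendsto V atBot (𝓝 (V t)) := by
    have : V = fun _ => V t := funext fun x => hconst x t
    rw [this]; exact tendsto_const_nhds
  have := tendsto_nhds_unique hlim2 hlim
  rw [Real.log_one] at this
  have : V t = 1 := by rw [this]; ring
  simpa [hV, hfun] using this

lemma S1_strictAnti (href : IsReference p S1 I1) : StrictAnti S1 := by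
  apply strictAnti_of_deriv_neg
  intro x
  rw [((ref_hasDerivAt href.1 x).1).deriv]
  have h1 := href.1.Spos x (mem_univ x)
  have h2 := href.2.1 x
  have h3 := beta_pos p
  have : 0 < p.β * S1 x * I1 x := by positivity
  linarith

lemma exists_tp (href : IsReference p S1 I1) : ∃ tp, S1 tp = p.Scrit := by
  obtain ⟨htraj, hIpos, hSlim, hIlim⟩ := href
  have hS1pos : ∀ u, 0 < S1 u := fun u => htraj.Spos u (mem_univ u)
  have hβ := beta_pos p
  -- find a point where S1 ≤ 0 < Scrit is impossible, so find where S1 < Scrit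
  have hlow : ∃ t2, S1 t2 ≤ p.Scrit := by
    by_contra hcon
    push_neg at hcon
    -- I1 is monotone
    have hIm : Monotone I1 := by
      apply monotone_of_deriv_nonneg
      · exact fun u => ((ref_hasDerivAt htraj u).2).differentiableAt
      · intro x
        rw [((ref_hasDerivAt htraj x).2).deriv]
        have h1 : p.γ ≤ p.β * S1 x := by
          have := hcon x
          calc p.γ = p.Scrit * p.β := (Scrit_mul_beta p).symm
          _ ≤ S1 x * p.β := by
              apply mul_le_mul_of_nonneg_right (le_of_lt this) (le_of_lt hβ)
          _ = p.β * S1 x := mul_comm _ _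
        nlinarith [hIpos x, hIpos x]
    set c : ℝ := p.γ * I1 0 with hc
    have hcpos : 0 < c := mul_pos p.hγ (hIpos 0)
    set t : ℝ := max 1 (S1 0 / c) with ht
    have ht0 : (0:ℝ) ≤ t := le_trans zero_le_one (le_max_left _ _)
    have hfc : Continuous (fun s => nullB s * p.β * S1 s * I1 s) :=
      ((continuous_const.mul continuous_const).mul (traj_contS htraj)).mul (traj_contI htraj)
    have hmono : ∀ s ∈ Icc (0:ℝ) t, c ≤ nullB s * p.β * S1 s * I1 s := by
      intro s hs
      have h1 : p.Scrit ≤ S1 s := le_of_lt (hcon s)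
      have h2 : I1 0 ≤ I1 s := hIm hs.1
      have h3 : 0 < I1 0 := hIpos 0
      have h4 : (0:ℝ) < p.Scrit := Scrit_pos p
      have h5 : 0 < S1 s := hS1pos s
      have : p.Scrit * p.β * I1 0 ≤ S1 s * p.β * I1 s :=
        mul_le_mul (mul_le_mul_of_nonneg_right h1 (le_of_lt hβ)) h2 (le_of_lt h3)
          (by positivity)
      calc c = p.Scrit * p.β * I1 0 := by rw [hc, Scrit_mul_beta]
      _ ≤ S1 s * p.β * I1 s := this
      _ = nullB s * p.β * S1 s * I1 s := by simp only [nullB]; ring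
    have hint : (t - 0) * c ≤ ∫ s in (0:ℝ)..t, nullB s * p.β * S1 s * I1 s := by
      have := intervalIntegral.integral_mono_on ht0
        (_root_.intervalIntegrable_const (c := c)) (hfc.intervalIntegrable (μ := volume) _ _) hmono
      rwa [intervalIntegral.integral_const, smul_eq_mul] at this
    have hSeq := htraj.S_eq 0 (mem_univ _) t (mem_univ _) ht0
    have hbound : S1 t ≤ S1 0 - t * c := by rw [hSeq]; simp only [sub_zero] at hint; linarith
    have htc : S1 0 ≤ t * c := by
      have : S1 0 / c ≤ t := le_max_right _ _
      calc S1 0 = (S1 0 / c) * c := by field_simp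
      _ ≤ t * c := mul_le_mul_of_nonneg_right this (le_of_lt hcpos)
    have : S1 t ≤ 0 := by linarith
    exact absurd (hS1pos t) (not_lt.mpr this)
  obtain ⟨t2, ht2⟩ := hlow
  have hup : ∃ t1, p.Scrit < S1 t1 := by
    have := hSlim.eventually (eventually_gt_nhds (Scrit_lt_one p))
    exact this.exists
  obtain ⟨t1, ht1⟩ := hup
  have ht12 : t1 ≤ t2 := by
    by_contra hcon
    push_neg at hcon
    have := (S1_strictAnti ⟨htraj, hIpos, hSlim, hIlim⟩) hcon
    linarith
  have hIVT := intermediate_value_Icc' ht12 ((traj_contS htraj).continuousOn)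
  have hmem : p.Scrit ∈ Icc (S1 t2) (S1 t1) := ⟨ht2, le_of_lt ht1⟩
  obtain ⟨tp, _, htp⟩ := hIVT hmem
  exact ⟨tp, htp⟩

lemma I1_strictMonoOn (href : IsReference p S1 I1) {tp : ℝ} (htp : S1 tp = p.Scrit) :
    StrictMonoOn I1 (Iic tp) := by
  apply strictMonoOn_of_deriv_pos (convex_Iic _)
  · exact (traj_contI href.1).continuousOn
  · intro x hx
    rw [interior_Iic] at hx
    rw [((ref_hasDerivAt href.1 x).2).deriv]
    have h1 : p.Scrit < S1 x := by
      rw [← htp]; exact S1_strictAnti href hx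
    have h2 : p.γ < p.β * S1 x := by
      calc p.γ = p.Scrit * p.β := (Scrit_mul_beta p).symm
      _ < S1 x * p.β := by apply mul_lt_mul_of_pos_right h1 (beta_pos p)
      _ = p.β * S1 x := mul_comm _ _
    nlinarith [href.2.1 x]


/-- Global forward existence of the uncontrolled SIR flow along the orbit
`I = c - hfun S`, defined by inverting the time integral. -/
lemma flow_exists (p : SIRParams) {c Sinf S0 Sr : ℝ}
    (hSinf : 0 < Sinf) (h1 : Sinf < S0) (h2 : S0 < Sr)
    (hg0 : c - hfun p Sinf = 0)
    (hgpos : ∀ s, Sinf < s → s ≤ Sr → 0 < c - hfun p s) :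
    ∃ (ε : ℝ) (Sf : ℝ → ℝ), 0 < ε ∧ Continuous Sf ∧ Sf 0 = S0 ∧
      (∀ t, 0 ≤ t → Sf t ≤ S0) ∧
      (∀ t, Sinf < Sf t ∧ Sf t < Sr) ∧
      (∀ t, -ε < t →
        HasDerivAt Sf (-(p.β * Sf t * (c - hfun p (Sf t)))) t) := by
  classical
  have hβ := beta_pos p
  set g : ℝ → ℝ := fun s => c - hfun p s with hgdef
  have hgderiv : ∀ s : ℝ, s ≠ 0 → HasDerivAt g (-(1 - p.Scrit * s⁻¹)) s :=
    fun s hs => (hfun_hasDeriv p hs).const_sub c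
  have hgcont : ∀ s : ℝ, 0 < s → ContinuousAt g s :=
    fun s hs => (hgderiv s (ne_of_gt hs)).continuousAt
  set ψ : ℝ → ℝ := fun u => (p.β * u * g u)⁻¹ with hψdef
  set J : Set ℝ := Ioo Sinf Sr with hJdef
  have hJopen : IsOpen J := isOpen_Ioo
  have hJpos : ∀ u ∈ J, 0 < u := fun u hu => lt_trans hSinf hu.1
  have hgJ : ∀ u ∈ J, 0 < g u := fun u hu => hgpos u hu.1 (le_of_lt hu.2)
  have hprodpos : ∀ u ∈ J, 0 < p.β * u * g u := fun u hu => by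
    have := hJpos u hu; have := hgJ u hu; positivity
  have hψpos : ∀ u ∈ J, 0 < ψ u := fun u hu => inv_pos.mpr (hprodpos u hu)
  have hψcontAt : ∀ u ∈ J, ContinuousAt ψ u := by
    intro u hu
    exact ((continuous_const.continuousAt.mul continuousAt_id).mul
      (hgcont u (hJpos u hu))).inv₀ (ne_of_gt (hprodpos u hu))
  have hψcontOn : ContinuousOn ψ J := fun u hu => (hψcontAt u hu).continuousWithinAt
  have hJord : OrdConnected J := ordConnected_Ioo
  have hψint : ∀ {x y : ℝ}, x ∈ J → y ∈ J → IntervalIntegrable ψ volume x y :=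
    fun hx hy => (hψcontOn.mono (hJord.uIcc_subset hx hy)).intervalIntegrable
  set F : ℝ → ℝ := fun σ => -∫ u in S0..σ, ψ u with hFdef
  have hS0J : S0 ∈ J := ⟨h1, h2⟩
  have hFderiv : ∀ σ ∈ J, HasDerivAt F (-(ψ σ)) σ := by
    intro σ hσ
    exact (intervalIntegral.integral_hasDerivAt_right (hψint hS0J hσ)
      (ContinuousAt.stronglyMeasurableAtFilter hJopen hψcontAt σ hσ) (hψcontAt σ hσ)).neg
  have hFcontOn : ContinuousOn F J :=
    fun σ hσ => ((hFderiv σ hσ).continuousAt).continuousWithinAt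
  have hFanti : StrictAntiOn F J := by
    apply strictAntiOn_of_deriv_neg (convex_Ioo _ _) hFcontOn
    intro x hx
    rw [interior_Ioo] at hx
    rw [(hFderiv x hx).deriv]
    simpa using hψpos x hx
  have hFS0 : F S0 = 0 := by simp [hFdef]
  set mid : ℝ := (S0 + Sr) / 2 with hmid
  have hS0mid : S0 < mid := by rw [hmid]; linarith
  have hmidSr : mid < Sr := by rw [hmid]; linarith
  have hmidJ : mid ∈ J := ⟨lt_trans h1 hS0mid, hmidSr⟩
  have hIooSub : Ioo Sinf mid ⊆ J := fun x hx => ⟨hx.1, lt_trans hx.2 hmidSr⟩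
  set e : ℝ := F mid with he
  have helt0 : e < 0 := by
    rw [he, ← hFS0]; exact hFanti hS0J hmidJ hS0mid
  clear_value e
  -- blow-up of F near Sinf
  have hFlarge : Tendsto F (𝓝[>] Sinf) atTop := by
    set K : ℝ := 1 + p.Scrit / Sinf with hK
    have hKpos : 0 < K := by
      have : 0 < p.Scrit / Sinf := div_pos (Scrit_pos p) hSinf
      rw [hK]; linarith
    have hgb : ∀ u ∈ Icc Sinf S0, g u ≤ K * (u - Sinf) := by
      have hder : ∀ x ∈ Icc Sinf S0, HasDerivWithinAt g (-(1 - p.Scrit * x⁻¹)) (Icc Sinf S0) x :=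
        fun x hx => (hgderiv x (ne_of_gt (lt_of_lt_of_le hSinf hx.1))).hasDerivWithinAt
      have hbound : ∀ x ∈ Ico Sinf S0, ‖-(1 - p.Scrit * x⁻¹)‖ ≤ K := by
        intro x hx
        have hx0 : 0 < x := lt_of_lt_of_le hSinf hx.1
        have hb1 : p.Scrit * x⁻¹ ≤ p.Scrit / Sinf := by
          rw [div_eq_mul_inv]
          exact mul_le_mul_of_nonneg_left (by
            exact inv_anti₀ hSinf hx.1) (le_of_lt (Scrit_pos p))
        have hb2 : 0 < p.Scrit * x⁻¹ := mul_pos (Scrit_pos p) (inv_pos.mpr hx0)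
        rw [norm_neg, Real.norm_eq_abs, abs_le]
        constructor <;> [skip; skip] <;> rw [hK] <;> linarith
      have := norm_image_sub_le_of_norm_deriv_le_segment' hder hbound
      intro u hu
      have h3 := this u hu
      have hgSinf : g Sinf = 0 := hg0
      rw [hgSinf, sub_zero] at h3
      have : |g u| ≤ K * (u - Sinf) := by
        simpa [Real.norm_eq_abs] using h3
      exact le_trans (le_abs_self _) this
    set C : ℝ := p.β * S0 * K with hC
    have hCpos : 0 < C := mul_pos (mul_pos hβ (lt_trans hSinf h1)) hKpos
    have hFlow : ∀ σ ∈ Ioo Sinf S0,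
        C⁻¹ * (Real.log (S0 - Sinf) - Real.log (σ - Sinf)) ≤ F σ := by
      intro σ hσ
      have hσJ : σ ∈ J := ⟨hσ.1, lt_trans hσ.2 (lt_trans hS0mid hmidSr)⟩
      have hFσ : F σ = ∫ u in σ..S0, ψ u := by
        show -∫ u in S0..σ, ψ u = ∫ u in σ..S0, ψ u
        rw [intervalIntegral.integral_symm σ S0, neg_neg]
      set minor : ℝ → ℝ := fun u => (C * (u - Sinf))⁻¹ with hminor
      have hminorcont : ContinuousOn minor (Icc σ S0) := by
        apply ContinuousOn.inv₀
        · exact (continuous_const.mul (continuous_id.sub continuous_const)).continuousOn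
        · intro u hu
          have h6 : 0 < u - Sinf := by
            have h7 : σ ≤ u := hu.1
            have h8 := hσ.1
            linarith
          exact ne_of_gt (mul_pos hCpos h6)
      have hminorint : IntervalIntegrable minor volume σ S0 := by
        apply ContinuousOn.intervalIntegrable
        rwa [uIcc_of_le (le_of_lt hσ.2)]
      have hpoint : ∀ u ∈ Icc σ S0, minor u ≤ ψ u := by
        intro u hu
        have huSinf : Sinf < u := lt_of_lt_of_le hσ.1 hu.1
        have huJ : u ∈ J := ⟨huSinf, lt_of_le_of_lt hu.2 (lt_trans hS0mid hmidSr)⟩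
        have hgu : 0 < g u := hgJ u huJ
        have hu0 : 0 < u := hJpos u huJ
        apply inv_anti₀ (hprodpos u huJ)
        calc p.β * u * g u ≤ p.β * S0 * (K * (u - Sinf)) := by
              apply mul_le_mul
              · exact mul_le_mul_of_nonneg_left hu.2 (le_of_lt hβ)
              · exact hgb u ⟨le_of_lt huSinf, hu.2⟩
              · exact le_of_lt hgu
              · exact mul_nonneg (le_of_lt hβ) (le_of_lt (lt_trans hSinf h1))
        _ = C * (u - Sinf) := by rw [hC]; ring
      have hmono := intervalIntegral.integral_mono_on (le_of_lt hσ.2) hminorint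
        (hψint hσJ hS0J) hpoint
      have hcalc : ∫ u in σ..S0, minor u
          = C⁻¹ * (Real.log (S0 - Sinf) - Real.log (σ - Sinf)) := by
        have : ∀ u : ℝ, minor u = C⁻¹ * (u - Sinf)⁻¹ := by
          intro u
          show (C * (u - Sinf))⁻¹ = C⁻¹ * (u - Sinf)⁻¹
          rw [mul_inv]
        simp only [this]
        rw [intervalIntegral.integral_const_mul]
        rw [intervalIntegral.integral_comp_sub_right (fun x => x⁻¹) Sinf]
        rw [integral_inv_of_pos (by linarith [hσ.1] : (0:ℝ) < σ - Sinf)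
          (by linarith [hσ.2, hσ.1] : (0:ℝ) < S0 - Sinf)]
        rw [Real.log_div (by linarith [hσ.2, hσ.1]) (by linarith [hσ.1])]
      rw [← hcalc, hFσ]
      exact hmono
    have htend : Tendsto (fun σ => C⁻¹ * (Real.log (S0 - Sinf) - Real.log (σ - Sinf)))
        (𝓝[>] Sinf) atTop := by
      apply Tendsto.const_mul_atTop (inv_pos.mpr hCpos)
      have hsub : Tendsto (fun σ : ℝ => σ - Sinf) (𝓝[>] Sinf) (𝓝[>] 0) := by
        apply tendsto_nhdsWithin_of_tendsto_nhds_of_eventually_within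
        · have h9 : Tendsto (fun σ : ℝ => σ - Sinf) (𝓝 Sinf) (𝓝 (Sinf - Sinf)) :=
            Filter.Tendsto.sub tendsto_id tendsto_const_nhds
          have h10 : Tendsto (fun σ : ℝ => σ - Sinf) (𝓝 Sinf) (𝓝 0) := by simpa using h9
          exact h10.mono_left nhdsWithin_le_nhds
        · filter_upwards [self_mem_nhdsWithin] with x hx
          simp only [mem_Ioi] at hx ⊢; linarith
      have hlog : Tendsto (fun σ : ℝ => Real.log (σ - Sinf)) (𝓝[>] Sinf) atBot :=
        Real.tendsto_log_nhdsGT_zero.comp hsub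
      simp only [sub_eq_add_neg]
      exact tendsto_atTop_add_const_left _ _ (tendsto_neg_atBot_atTop.comp hlog)
    apply tendsto_atTop_mono' _ _ htend
    filter_upwards [Ioo_mem_nhdsGT_of_mem (Set.left_mem_Ico.mpr h1)] with σ hσ
    exact hFlow σ hσ
  -- surjectivity of F onto (e, ∞)
  have hsurj : ∀ t, e < t → ∃ σ, σ ∈ Ioo Sinf mid ∧ F σ = t := by
    intro t ht
    obtain ⟨σ1, hσ1, hFσ1⟩ : ∃ σ1, σ1 ∈ Ioo Sinf S0 ∧ t < F σ1 := by
      have h1' := hFlarge.eventually_gt_atTop t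
      have h2' : Ioo Sinf S0 ∈ 𝓝[>] Sinf := Ioo_mem_nhdsGT_of_mem (Set.left_mem_Ico.mpr h1)
      obtain ⟨σ1, hh1, hh2⟩ := (h1'.and (eventually_of_mem h2' fun x hx => hx)).exists
      exact ⟨σ1, hh2, hh1⟩
    have hσ1mid : σ1 < mid := lt_trans hσ1.2 hS0mid
    have hcont : ContinuousOn F (uIcc σ1 mid) := by
      apply hFcontOn.mono
      apply hJord.uIcc_subset (hIooSub ⟨hσ1.1, hσ1mid⟩) hmidJ
    have hIVT := intermediate_value_uIcc hcont
    have hmem : t ∈ uIcc (F σ1) (F mid) := by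
      rw [← he]
      rw [Set.uIcc_of_ge (le_of_lt (lt_trans ht hFσ1))]
      exact ⟨le_of_lt ht, le_of_lt hFσ1⟩
    obtain ⟨σ, hσmem, hFσ⟩ := hIVT hmem
    rw [uIcc_of_le (le_of_lt hσ1mid)] at hσmem
    refine ⟨σ, ⟨lt_of_lt_of_le hσ1.1 hσmem.1, ?_⟩, hFσ⟩
    rcases lt_or_eq_of_le hσmem.2 with h | h
    · exact h
    · exfalso; rw [h] at hFσ; rw [← he] at hFσ; rw [hFσ] at ht; exact lt_irrefl t ht
  set Sflow : ℝ → ℝ := fun t =>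
    if h : ∃ σ, σ ∈ Ioo Sinf mid ∧ F σ = t then Classical.choose h else S0 with hSflowdef
  have hkey : ∀ t, e < t → Sflow t ∈ Ioo Sinf mid ∧ F (Sflow t) = t := by
    intro t ht
    have hex := hsurj t ht
    have heq : Sflow t = Classical.choose hex := by
      simp only [hSflowdef]
      exact dif_pos hex
    rw [heq]
    exact Classical.choose_spec hex
  have hinj : InjOn F J := hFanti.injOn
  have hSflow0 : Sflow 0 = S0 := by
    obtain ⟨hm, hf⟩ := hkey 0 helt0
    exact hinj (hIooSub hm) hS0J (by rw [hf, hFS0])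
  have hSflowle : ∀ t, 0 ≤ t → Sflow t ≤ S0 := by
    intro t ht
    obtain ⟨hm, hf⟩ := hkey t (lt_of_lt_of_le helt0 ht)
    by_contra hcon
    push_neg at hcon
    have := hFanti hS0J (hIooSub hm) hcon
    rw [hf, hFS0] at this
    linarith
  -- continuity of Sflow on (e, ∞)
  have hcontSflow : ∀ t, e < t → ContinuousAt Sflow t := by
    intro t ht
    rw [Metric.continuousAt_iff]
    intro ε hε
    obtain ⟨hσmem, hFσ⟩ := hkey t ht
    set σ := Sflow t with hσ
    set ε' : ℝ := min (ε / 2) (min ((σ - Sinf) / 2) ((mid - σ) / 2)) with hε'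
    have hd1 : 0 < σ - Sinf := by have := hσmem.1; linarith
    have hd2 : 0 < mid - σ := by have := hσmem.2; linarith
    have hε'pos : 0 < ε' := by
      apply lt_min (by linarith) (lt_min (by linarith) (by linarith))
    have hε'a : ε' ≤ (σ - Sinf) / 2 := le_trans (min_le_right _ _) (min_le_left _ _)
    have hε'b : ε' ≤ (mid - σ) / 2 := le_trans (min_le_right _ _) (min_le_right _ _)
    have hε'c : ε' ≤ ε / 2 := min_le_left _ _
    have hmem1 : σ - ε' ∈ Ioo Sinf mid := ⟨by linarith, by linarith⟩
    have hmem2 : σ + ε' ∈ Ioo Sinf mid := ⟨by linarith, by linarith⟩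
    have hlt1 : F (σ + ε') < t := by
      rw [← hFσ]
      exact hFanti (hIooSub hσmem) (hIooSub hmem2) (by linarith)
    have hlt2 : t < F (σ - ε') := by
      rw [← hFσ]
      exact hFanti (hIooSub hmem1) (hIooSub hσmem) (by linarith)
    have hegap : e < F (σ + ε') := by
      rw [he]
      exact hFanti (hIooSub hmem2) hmidJ hmem2.2
    refine ⟨min (t - F (σ + ε')) (F (σ - ε') - t),
      lt_min (by linarith) (by linarith), fun {y} hy => ?_⟩
    rw [Real.dist_eq] at hy
    have hy1 : F (σ + ε') < y := by
      have := abs_lt.mp hy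
      have h5 := min_le_left (t - F (σ + ε')) (F (σ - ε') - t)
      linarith [this.1]
    have hy2 : y < F (σ - ε') := by
      have := abs_lt.mp hy
      have h5 := min_le_right (t - F (σ + ε')) (F (σ - ε') - t)
      linarith [this.2]
    have hye : e < y := lt_trans hegap hy1
    obtain ⟨hymem, hyF⟩ := hkey y hye
    have hup : Sflow y < σ + ε' := by
      by_contra hcon
      push_neg at hcon
      rcases lt_or_eq_of_le hcon with h | h
      · have := hFanti (hIooSub hmem2) (hIooSub hymem) h
        rw [hyF] at this; linarith
      · rw [← h] at hyF; linarith
    have hdown : σ - ε' < Sflow y := by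
      by_contra hcon
      push_neg at hcon
      rcases lt_or_eq_of_le hcon with h | h
      · have := hFanti (hIooSub hymem) (hIooSub hmem1) h
        rw [hyF] at this; linarith
      · rw [h] at hyF; linarith
    rw [Real.dist_eq, abs_lt]
    constructor <;> linarith
  -- derivative of Sflow on (e, ∞)
  have hderivSflow : ∀ t, e < t →
      HasDerivAt Sflow (-(p.β * Sflow t * g (Sflow t))) t := by
    intro t ht
    obtain ⟨hσmem, hFσ⟩ := hkey t ht
    have hσJ : Sflow t ∈ J := hIooSub hσmem
    have hfg : ∀ᶠ y in 𝓝 t, F (Sflow y) = y := by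
      filter_upwards [Ioi_mem_nhds ht] with y hy
      exact (hkey y hy).2
    have hne : -(ψ (Sflow t)) ≠ 0 := by
      have := hψpos _ hσJ; intro hcon; rw [neg_eq_zero] at hcon; linarith
    have hda := HasDerivAt.of_local_left_inverse (hcontSflow t ht)
      (hFderiv _ hσJ) hne hfg
    have heq : (-(ψ (Sflow t)))⁻¹ = -(p.β * Sflow t * g (Sflow t)) := by
      show (-((p.β * Sflow t * g (Sflow t))⁻¹))⁻¹ = -(p.β * Sflow t * g (Sflow t))
      rw [← inv_neg, inv_inv]
    rwa [heq] at hda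
  -- package: shift by max to extend to all of ℝ
  set Sf : ℝ → ℝ := fun t => Sflow (max t (e/2)) with hSf
  have hSfeq : ∀ t : ℝ, e/2 ≤ t → Sf t = Sflow t := by
    intro t ht
    simp only [hSf]
    rw [max_eq_left ht]
  refine ⟨-(e/2), Sf, by linarith, ?_, ?_, ?_, ?_, ?_⟩
  · rw [continuous_iff_continuousAt]
    intro u
    have hmax : e < max u (e/2) := lt_of_lt_of_le (by linarith) (le_max_right _ _)
    have hc1 : ContinuousAt (fun t : ℝ => max t (e/2)) u :=
      (continuous_id.max continuous_const).continuousAt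
    exact ContinuousAt.comp (f := fun t : ℝ => max t (e/2)) (x := u)
      (hcontSflow _ hmax) hc1
  · rw [hSfeq 0 (by linarith)]
    exact hSflow0
  · intro t ht
    rw [hSfeq t (by linarith)]
    exact hSflowle t ht
  · intro t
    have hmax : e < max t (e/2) := lt_of_lt_of_le (by linarith) (le_max_right _ _)
    obtain ⟨hmem, _⟩ := hkey _ hmax
    exact ⟨hmem.1, lt_trans hmem.2 hmidSr⟩
  · intro t ht
    rw [neg_neg] at ht
    have ht' : e < t := lt_trans (by linarith) ht
    have hteq := hSfeq t (le_of_lt ht)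
    rw [hteq]
    have hd := hderivSflow t ht'
    apply hd.congr_of_eventuallyEq
    filter_upwards [Ioi_mem_nhds ht] with y hy
    exact hSfeq y (le_of_lt hy)


set_option maxHeartbeats 4000000 in
/-- There is an intervention of any prescribed duration whose peak prevalence is
strictly below the uncontrolled peak `Mval p`. -/
lemma exists_better (href : IsReference p S1 I1) {τ : ℝ} (hτ : 0 < τ) :
    ∃ b0 : Intervention p, b0.τ = τ ∧ ∃ S' I' : ℝ → ℝ,
      IsControlled p S1 I1 b0 S' I' ∧ Imax I' < Mval p := by
  classical
  have hβ := beta_pos p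
  obtain ⟨tp, htp⟩ := exists_tp href
  set T : ℝ := tp - 1 with hT
  have hTtp : T < tp := by rw [hT]; linarith
  set S0 : ℝ := S1 T with hS0
  set a : ℝ := I1 T with ha
  have hS0crit : p.Scrit < S0 := by rw [hS0, ← htp]; exact S1_strictAnti href hTtp
  have hS0le1 : S0 ≤ 1 := href.1.Sle_one T (mem_univ T)
  have hS0pos : 0 < S0 := href.1.Spos T (mem_univ T)
  have hapos : 0 < a := href.2.1 T
  have henergyT : a + hfun p S0 = 1 := ref_energy href T
  set I0 : ℝ := a * Real.exp (-(p.γ * τ)) with hI0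
  have hI0pos : 0 < I0 := mul_pos hapos (Real.exp_pos _)
  have hexplt1 : Real.exp (-(p.γ * τ)) < 1 := by
    rw [Real.exp_lt_one_iff]
    have := mul_pos p.hγ hτ
    linarith
  have hI0lta : I0 < a := by
    rw [hI0]
    nlinarith [hexplt1, hapos]
  set c : ℝ := I0 + hfun p S0 with hc
  have hgS0 : c - hfun p S0 = I0 := by rw [hc]; ring
  have hlogS0 : Real.log S0 ≤ 0 := Real.log_nonpos (le_of_lt hS0pos) hS0le1
  have hfunS0pos : 0 < hfun p S0 := by
    rw [hfun]
    nlinarith [Scrit_pos p]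
  have halt1 : a < 1 := by linarith
  have hcval : c = 1 - a * (1 - Real.exp (-(p.γ * τ))) := by
    rw [hc, hI0]; nlinarith [henergyT]
  have hcpos : 0 < c := by rw [hc]; linarith
  have hclt1 : c < 1 := by
    rw [hcval]
    nlinarith [hexplt1, hapos]
  -- lower root Sinf of c = hfun
  set A : Set ℝ := {s | 0 < s ∧ s ≤ S0 ∧ c - hfun p s ≤ 0} with hA
  have hAne : A.Nonempty := by
    refine ⟨S0 * Real.exp (-(c + 1) / p.Scrit), ?_, ?_, ?_⟩
    · positivity
    · have : Real.exp (-(c + 1) / p.Scrit) ≤ 1 := by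
        rw [Real.exp_le_one_iff]
        apply div_nonpos_of_nonpos_of_nonneg (by linarith) (le_of_lt (Scrit_pos p))
      nlinarith
    · have hlogeq : Real.log (S0 * Real.exp (-(c + 1) / p.Scrit))
          = Real.log S0 + (-(c + 1) / p.Scrit) := by
        rw [Real.log_mul (ne_of_gt hS0pos) (ne_of_gt (Real.exp_pos _)), Real.log_exp]
      rw [hfun, hlogeq]
      have hSc := Scrit_pos p
      have hdiv : p.Scrit * (-(c + 1) / p.Scrit) = -(c + 1) := by
        field_simp
      rw [mul_add, hdiv]
      have hexppos : 0 < S0 * Real.exp (-(c + 1) / p.Scrit) := by positivity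
      nlinarith [mul_nonpos_of_nonneg_of_nonpos (le_of_lt hSc) hlogS0]
  have hAbdd : BddAbove A := ⟨S0, fun s hs => hs.2.1⟩
  set Sinf : ℝ := sSup A with hSinfdef
  obtain ⟨s₀, hs₀⟩ := hAne
  have hSinfpos : 0 < Sinf := lt_of_lt_of_le hs₀.1 (le_csSup hAbdd hs₀)
  have hSinfleS0 : Sinf ≤ S0 := csSup_le ⟨s₀, hs₀⟩ (fun s hs => hs.2.1)
  have hgpos' : ∀ s, Sinf < s → s ≤ S0 → 0 < c - hfun p s := by
    intro s h1 h2
    by_contra hcon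
    push_neg at hcon
    have hmem : s ∈ A := ⟨lt_trans hSinfpos h1, h2, hcon⟩
    have := le_csSup hAbdd hmem
    linarith
  have hgSinf_le : c - hfun p Sinf ≤ 0 := by
    by_contra hcon
    push_neg at hcon
    have hca : ContinuousAt (fun s => c - hfun p s) Sinf :=
      ((hfun_hasDeriv p (ne_of_gt hSinfpos)).const_sub c).continuousAt
    have hev : ∀ᶠ s in 𝓝 Sinf, 0 < c - hfun p s := hca.eventually (eventually_gt_nhds hcon)
    rw [Metric.eventually_nhds_iff] at hev
    obtain ⟨ε, hεpos, hball⟩ := hev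
    obtain ⟨s', hs'A, hs'gt⟩ := exists_lt_of_lt_csSup ⟨s₀, hs₀⟩
      (show Sinf - ε < sSup A by rw [← hSinfdef]; linarith)
    have hs'le : s' ≤ Sinf := le_csSup hAbdd hs'A
    have : dist s' Sinf < ε := by
      rw [Real.dist_eq, abs_lt]; constructor <;> linarith
    have := hball this
    linarith [hs'A.2.2]
  have hSinfltS0 : Sinf < S0 := by
    rcases lt_or_eq_of_le hSinfleS0 with h | h
    · exact h
    · exfalso
      rw [h, hgS0] at hgSinf_le
      linarith
  have hgSinf0 : c - hfun p Sinf = 0 := by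
    apply le_antisymm hgSinf_le
    have hca : Tendsto (fun s => c - hfun p s) (𝓝[>] Sinf) (𝓝 (c - hfun p Sinf)) :=
      (((hfun_hasDeriv p (ne_of_gt hSinfpos)).const_sub c).continuousAt).mono_left
        nhdsWithin_le_nhds
    apply ge_of_tendsto hca
    filter_upwards [Ioo_mem_nhdsGT_of_mem (Set.left_mem_Ico.mpr hSinfltS0)] with s hs
    exact le_of_lt (hgpos' s hs.1 (le_of_lt hs.2))
  -- right extension beyond S0
  obtain ⟨ε₁, hε₁pos, hball₁⟩ : ∃ ε₁ > 0, ∀ ⦃s : ℝ⦄, dist s S0 < ε₁ → 0 < c - hfun p s := by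
    have hca : ContinuousAt (fun s => c - hfun p s) S0 :=
      ((hfun_hasDeriv p (ne_of_gt hS0pos)).const_sub c).continuousAt
    have hpos0 : (0:ℝ) < c - hfun p S0 := by rw [hgS0]; exact hI0pos
    have hev : ∀ᶠ s in 𝓝 S0, 0 < c - hfun p s := hca.eventually (eventually_gt_nhds hpos0)
    rw [Metric.eventually_nhds_iff] at hev
    exact hev
  set Sr : ℝ := S0 + ε₁ / 2 with hSr
  have hS0Sr : S0 < Sr := by rw [hSr]; linarith
  have hgposJ : ∀ s, Sinf < s → s ≤ Sr → 0 < c - hfun p s := by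
    intro s h1 h2
    rcases le_or_gt s S0 with h | h
    · exact hgpos' s h1 h
    · apply hball₁
      rw [Real.dist_eq, abs_lt]
      constructor <;> [skip; skip] <;> rw [hSr] at h2 <;> linarith
  obtain ⟨ε, Sf, hεpos, hSfcont, hSf0, hSfle, hSfbounds, hSfderiv⟩ :=
    flow_exists p hSinfpos hSinfltS0 hS0Sr hgSinf0 hgposJ
  have hSfpos : ∀ u : ℝ, 0 < Sf u := fun u => lt_trans hSinfpos (hSfbounds u).1
  -- competitor data
  set bfun : ℝ → ℝ := fun t => if T ≤ t ∧ t < T + τ then 0 else 1 with hbfun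
  set S' : ℝ → ℝ := fun t =>
    if t ≤ T then S1 t else if t ≤ T + τ then S0 else Sf (t - (T + τ)) with hS'def
  set I' : ℝ → ℝ := fun t =>
    if t ≤ T then I1 t else if t ≤ T + τ then a * Real.exp (-(p.γ * (t - T)))
    else c - hfun p (Sf (t - (T + τ))) with hI'def
  -- pointwise evaluations
  have hS'pre : ∀ t, t ≤ T → S' t = S1 t ∧ I' t = I1 t := by
    intro t ht
    constructor
    · show (if t ≤ T then S1 t else _) = S1 t
      rw [if_pos ht]
    · show (if t ≤ T then I1 t else _) = I1 t
      rw [if_pos ht]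
  have hS'mid : ∀ t, T ≤ t → t ≤ T + τ → S' t = S0 := by
    intro t h1 h2
    show (if t ≤ T then S1 t else if t ≤ T + τ then S0 else _) = S0
    rcases lt_or_eq_of_le h1 with h | h
    · rw [if_neg (not_le.mpr h), if_pos h2]
    · rw [← h, if_pos le_rfl, hS0]
  have hI'mid : ∀ t, T ≤ t → t ≤ T + τ → I' t = a * Real.exp (-(p.γ * (t - T))) := by
    intro t h1 h2
    show (if t ≤ T then I1 t else if t ≤ T + τ then a * Real.exp (-(p.γ * (t - T))) else _)
      = a * Real.exp (-(p.γ * (t - T)))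
    rcases lt_or_eq_of_le h1 with h | h
    · rw [if_neg (not_le.mpr h), if_pos h2]
    · rw [← h, if_pos le_rfl, sub_self, mul_zero, neg_zero, Real.exp_zero, mul_one, ha]
  have hS'post : ∀ t, T + τ ≤ t → S' t = Sf (t - (T + τ)) := by
    intro t h1
    rcases lt_or_eq_of_le h1 with h | h
    · show (if t ≤ T then S1 t else if t ≤ T + τ then S0 else Sf (t - (T + τ)))
        = Sf (t - (T + τ))
      rw [if_neg (not_le.mpr (by linarith)), if_neg (not_le.mpr h)]
    · rw [← h, hS'mid (T + τ) (by linarith) le_rfl, sub_self, hSf0]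
  have hI'post : ∀ t, T + τ ≤ t → I' t = c - hfun p (Sf (t - (T + τ))) := by
    intro t h1
    rcases lt_or_eq_of_le h1 with h | h
    · show (if t ≤ T then I1 t else if t ≤ T + τ then _ else c - hfun p (Sf (t - (T + τ))))
        = c - hfun p (Sf (t - (T + τ)))
      rw [if_neg (not_le.mpr (by linarith)), if_neg (not_le.mpr h)]
    · rw [← h, hI'mid (T + τ) (by linarith) le_rfl, sub_self, hSf0, hgS0, hI0]
      ring_nf
  -- b values
  have hbval_lt : ∀ x, x < T → bfun x = 1 :=
    fun x hx => if_neg (fun h => absurd h.1 (not_le.mpr hx))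
  have hbval_mid : ∀ x, T ≤ x → x < T + τ → bfun x = 0 :=
    fun x h1 h2 => if_pos ⟨h1, h2⟩
  have hbval_ge : ∀ x, T + τ ≤ x → bfun x = 1 :=
    fun x hx => if_neg (fun h => absurd hx (not_le.mpr h.2))
  -- continuity
  have hSfcomp : Continuous (fun t : ℝ => Sf (t - (T + τ))) :=
    hSfcont.comp (continuous_id.sub continuous_const)
  have hgSfcomp : Continuous (fun t : ℝ => c - hfun p (Sf (t - (T + τ)))) := by
    rw [continuous_iff_continuousAt]
    intro x
    have h0 : Sf (x - (T + τ)) ≠ 0 := ne_of_gt (hSfpos _)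
    exact ContinuousAt.comp (f := fun t : ℝ => Sf (t - (T + τ))) (x := x)
      (((hfun_hasDeriv p h0).const_sub c).continuousAt) (hSfcomp.continuousAt)
  have hcontS' : Continuous S' := by
    have hinner : Continuous (fun t : ℝ => if t ≤ T + τ then S0 else Sf (t - (T + τ))) := by
      apply Continuous.if_le continuous_const hSfcomp continuous_id continuous_const
      intro x hx
      have hx' : x = T + τ := hx
      rw [hx', sub_self, hSf0]
    apply Continuous.if_le (traj_contS href.1) hinner continuous_id continuous_const
    intro x hx
    have hx' : x = T := hx
    rw [hx', if_pos (by linarith : T ≤ T + τ), hS0]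
  have hcontI' : Continuous I' := by
    have hmidc : Continuous (fun t : ℝ => a * Real.exp (-(p.γ * (t - T)))) := by
      apply Continuous.mul continuous_const
      apply Real.continuous_exp.comp
      exact ((continuous_const.mul (continuous_id.sub continuous_const)).neg)
    have hinner : Continuous (fun t : ℝ => if t ≤ T + τ then a * Real.exp (-(p.γ * (t - T)))
        else c - hfun p (Sf (t - (T + τ)))) := by
      apply Continuous.if_le hmidc hgSfcomp continuous_id continuous_const
      intro x hx
      have hx' : x = T + τ := hx
      rw [hx', sub_self, hSf0, hgS0, hI0]
      ring_nf
    apply Continuous.if_le (traj_contI href.1) hinner continuous_id continuous_const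
    intro x hx
    have hx' : x = T := hx
    rw [hx', if_pos (by linarith : T ≤ T + τ), sub_self, mul_zero, neg_zero, Real.exp_zero,
      mul_one, ha]
  -- pointwise bounds
  have hS'val : ∀ t, 0 < S' t ∧ S' t ≤ 1 ∧ 0 ≤ I' t ∧ S' t + I' t ≤ 1 := by
    intro t
    rcases le_or_gt t T with h | h
    · rw [(hS'pre t h).1, (hS'pre t h).2]
      exact ⟨href.1.Spos t (mem_univ t), href.1.Sle_one t (mem_univ t),
        href.1.Inonneg t (mem_univ t), href.1.sum_le_one t (mem_univ t)⟩
    · rcases le_or_gt t (T + τ) with h2 | h2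
      · rw [hS'mid t (le_of_lt h) h2, hI'mid t (le_of_lt h) h2]
        have hexp1 : Real.exp (-(p.γ * (t - T))) ≤ 1 := by
          rw [Real.exp_le_one_iff]
          have h3 : 0 < p.γ * (t - T) := mul_pos p.hγ (by linarith)
          linarith
        have hexp0 : 0 < Real.exp (-(p.γ * (t - T))) := Real.exp_pos _
        refine ⟨hS0pos, hS0le1, by positivity, ?_⟩
        have hsum1 : S0 + a ≤ 1 := by
          have h4 := href.1.sum_le_one T (mem_univ T)
          rw [← hS0, ← ha] at h4
          exact h4
        nlinarith
      · have hu0 : (0:ℝ) ≤ t - (T + τ) := by linarith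
        rw [hS'post t (by linarith), hI'post t (by linarith)]
        have hb1 := hSfbounds (t - (T + τ))
        have hle0 := hSfle _ hu0
        have hgposu : 0 < c - hfun p (Sf (t - (T + τ))) := hgposJ _ hb1.1 (le_of_lt hb1.2)
        have hSfle1 : Sf (t - (T + τ)) ≤ 1 := le_trans hle0 hS0le1
        refine ⟨hSfpos _, hSfle1, le_of_lt hgposu, ?_⟩
        have hlogSf : Real.log (Sf (t - (T + τ))) ≤ 0 :=
          Real.log_nonpos (le_of_lt (hSfpos _)) hSfle1
        have heq : Sf (t - (T + τ)) + (c - hfun p (Sf (t - (T + τ))))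
            = c + p.Scrit * Real.log (Sf (t - (T + τ))) := by
          rw [hfun]; ring
        rw [heq]
        nlinarith [Scrit_pos p]
  -- right derivatives everywhere
  have hDS : ∀ x : ℝ, HasDerivWithinAt S' (-(bfun x * p.β * S' x * I' x)) (Ioi x) x := by
    intro x
    rcases lt_or_ge x T with hx | hx
    · have hd := (ref_hasDerivAt href.1 x).1
      have heq : S' =ᶠ[𝓝[Ioi x] x] S1 := by
        filter_upwards [mem_nhdsWithin_of_mem_nhds (Iio_mem_nhds hx)] with y hy
        exact (hS'pre y (le_of_lt hy)).1
      have hval : -(bfun x * p.β * S' x * I' x) = -(p.β * S1 x * I1 x) := by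
        rw [hbval_lt x hx, (hS'pre x (le_of_lt hx)).1, (hS'pre x (le_of_lt hx)).2]; ring
      rw [hval]
      exact (hd.hasDerivWithinAt).congr_of_eventuallyEq heq (hS'pre x (le_of_lt hx)).1
    · rcases lt_or_ge x (T + τ) with hx2 | hx2
      · have heq : S' =ᶠ[𝓝[Ioi x] x] (fun _ => S0) := by
          filter_upwards [inter_mem self_mem_nhdsWithin
            (mem_nhdsWithin_of_mem_nhds (Iio_mem_nhds hx2))] with y hy
          exact hS'mid y (le_of_lt (lt_of_le_of_lt hx hy.1)) (le_of_lt hy.2)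
        have hval : -(bfun x * p.β * S' x * I' x) = 0 := by
          rw [hbval_mid x hx hx2]; ring
        rw [hval]
        exact (hasDerivWithinAt_const x (Ioi x) S0).congr_of_eventuallyEq heq
          (hS'mid x hx (le_of_lt hx2))
      · have hu : -ε < x - (T + τ) := by linarith
        have hder := hSfderiv _ hu
        have hcomp : HasDerivAt (fun y : ℝ => Sf (y - (T + τ)))
            (-(p.β * Sf (x - (T + τ)) * (c - hfun p (Sf (x - (T + τ)))))) x := by
          have h2 := HasDerivAt.comp x hder ((hasDerivAt_id x).sub_const (T + τ))
          simpa [Function.comp_def] using h2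
        have heq : S' =ᶠ[𝓝[Ioi x] x] (fun y => Sf (y - (T + τ))) := by
          filter_upwards [self_mem_nhdsWithin] with y hy
          exact hS'post y (le_of_lt (lt_of_le_of_lt hx2 hy))
        have hval : -(bfun x * p.β * S' x * I' x)
            = -(p.β * Sf (x - (T + τ)) * (c - hfun p (Sf (x - (T + τ))))) := by
          rw [hbval_ge x hx2, hS'post x hx2, hI'post x hx2]; ring
        rw [hval]
        exact (hcomp.hasDerivWithinAt).congr_of_eventuallyEq heq (hS'post x hx2)
  have hDI : ∀ x : ℝ, HasDerivWithinAt I'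
      (bfun x * p.β * S' x * I' x - p.γ * I' x) (Ioi x) x := by
    intro x
    rcases lt_or_ge x T with hx | hx
    · have hd := (ref_hasDerivAt href.1 x).2
      have heq : I' =ᶠ[𝓝[Ioi x] x] I1 := by
        filter_upwards [mem_nhdsWithin_of_mem_nhds (Iio_mem_nhds hx)] with y hy
        exact (hS'pre y (le_of_lt hy)).2
      have hval : bfun x * p.β * S' x * I' x - p.γ * I' x
          = p.β * S1 x * I1 x - p.γ * I1 x := by
        rw [hbval_lt x hx, (hS'pre x (le_of_lt hx)).1, (hS'pre x (le_of_lt hx)).2]; ring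
      rw [hval]
      exact (hd.hasDerivWithinAt).congr_of_eventuallyEq heq (hS'pre x (le_of_lt hx)).2
    · rcases lt_or_ge x (T + τ) with hx2 | hx2
      · have hdi : HasDerivAt (fun y : ℝ => a * Real.exp (-(p.γ * (y - T))))
            (a * (Real.exp (-(p.γ * (x - T))) * -(p.γ * 1))) x := by
          have h3 : HasDerivAt (fun y : ℝ => -(p.γ * (y - T))) (-(p.γ * 1)) x :=
            (((hasDerivAt_id x).sub_const T).const_mul p.γ).neg
          exact ((Real.hasDerivAt_exp _).comp x h3).const_mul a
        have heq : I' =ᶠ[𝓝[Ioi x] x] (fun y => a * Real.exp (-(p.γ * (y - T)))) := by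
          filter_upwards [inter_mem self_mem_nhdsWithin
            (mem_nhdsWithin_of_mem_nhds (Iio_mem_nhds hx2))] with y hy
          exact hI'mid y (le_of_lt (lt_of_le_of_lt hx hy.1)) (le_of_lt hy.2)
        have hval : bfun x * p.β * S' x * I' x - p.γ * I' x
            = a * (Real.exp (-(p.γ * (x - T))) * -(p.γ * 1)) := by
          rw [hbval_mid x hx hx2, hI'mid x hx (le_of_lt hx2)]; ring
        rw [hval]
        exact (hdi.hasDerivWithinAt).congr_of_eventuallyEq heq (hI'mid x hx (le_of_lt hx2))
      · have hu : -ε < x - (T + τ) := by linarith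
        have hder := hSfderiv _ hu
        set σ : ℝ := Sf (x - (T + τ)) with hσdef
        have hσpos : 0 < σ := hSfpos _
        have hcomp : HasDerivAt (fun y : ℝ => Sf (y - (T + τ)))
            (-(p.β * σ * (c - hfun p σ))) x := by
          have h2 := HasDerivAt.comp x hder ((hasDerivAt_id x).sub_const (T + τ))
          simpa [Function.comp_def] using h2
        have hgl : HasDerivAt (fun s => c - hfun p s) (-(1 - p.Scrit * σ⁻¹)) σ :=
          (hfun_hasDeriv p (ne_of_gt hσpos)).const_sub c
        have hκ0 : HasDerivAt ((fun s => c - hfun p s) ∘ (fun y : ℝ => Sf (y - (T + τ))))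
            ((-(1 - p.Scrit * σ⁻¹)) * (-(p.β * σ * (c - hfun p σ)))) x :=
          HasDerivAt.comp x hgl hcomp
        have hκ : HasDerivAt (fun y : ℝ => c - hfun p (Sf (y - (T + τ))))
            ((-(1 - p.Scrit * σ⁻¹)) * (-(p.β * σ * (c - hfun p σ)))) x := hκ0
        have hvaleq : (-(1 - p.Scrit * σ⁻¹)) * (-(p.β * σ * (c - hfun p σ)))
            = p.β * σ * (c - hfun p σ) - p.γ * (c - hfun p σ) := by
          have hb := Scrit_mul_beta p
          have hσne : σ ≠ 0 := ne_of_gt hσpos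
          calc (-(1 - p.Scrit * σ⁻¹)) * (-(p.β * σ * (c - hfun p σ)))
              = p.β * σ * (c - hfun p σ)
                - (p.Scrit * p.β) * (σ⁻¹ * σ) * (c - hfun p σ) := by ring
          _ = p.β * σ * (c - hfun p σ) - p.γ * (c - hfun p σ) := by
              rw [inv_mul_cancel₀ hσne, Scrit_mul_beta]; ring
        have heq : I' =ᶠ[𝓝[Ioi x] x] (fun y => c - hfun p (Sf (y - (T + τ)))) := by
          filter_upwards [self_mem_nhdsWithin] with y hy
          exact hI'post y (le_of_lt (lt_of_le_of_lt hx2 hy))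
        have hval : bfun x * p.β * S' x * I' x - p.γ * I' x
            = p.β * σ * (c - hfun p σ) - p.γ * (c - hfun p σ) := by
          rw [hbval_ge x hx2, hS'post x hx2, hI'post x hx2]; ring
        rw [hval, ← hvaleq]
        exact (hκ.hasDerivWithinAt).congr_of_eventuallyEq heq (hI'post x hx2)
  -- integrability
  have hbmeas : Measurable bfun := by
    have hmeasset : MeasurableSet {t : ℝ | T ≤ t ∧ t < T + τ} := measurableSet_Ico
    exact Measurable.ite hmeasset measurable_const measurable_const
  have hbabs : ∀ s, |bfun s| ≤ 1 := by
    intro s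
    show |if T ≤ s ∧ s < T + τ then (0:ℝ) else 1| ≤ 1
    split_ifs <;> norm_num
  have hfSmeas : Measurable (fun s => bfun s * p.β * S' s * I' s) :=
    ((hbmeas.mul measurable_const).mul hcontS'.measurable).mul hcontI'.measurable
  have habs : ∀ s, ‖bfun s * p.β * S' s * I' s‖ ≤ p.β := by
    intro s
    have h1 := hS'val s
    have h2 := hbabs s
    have hI'le1 : I' s ≤ 1 := by nlinarith [h1.1, h1.2.2.2]
    rw [Real.norm_eq_abs, abs_mul, abs_mul, abs_mul, abs_of_pos hβ,
      abs_of_pos h1.1, abs_of_nonneg h1.2.2.1]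
    have hb0 : 0 ≤ |bfun s| := abs_nonneg _
    have s1 : |bfun s| * p.β ≤ 1 * p.β := mul_le_mul_of_nonneg_right h2 (le_of_lt hβ)
    have s2 : |bfun s| * p.β * S' s ≤ 1 * p.β * 1 := by
      calc |bfun s| * p.β * S' s ≤ 1 * p.β * S' s :=
            mul_le_mul_of_nonneg_right s1 (le_of_lt h1.1)
      _ ≤ 1 * p.β * 1 := mul_le_mul_of_nonneg_left h1.2.1 (by positivity)
    have s3 : |bfun s| * p.β * S' s * I' s ≤ 1 * p.β * 1 * 1 := by
      calc |bfun s| * p.β * S' s * I' s ≤ 1 * p.β * 1 * I' s :=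
            mul_le_mul_of_nonneg_right s2 h1.2.2.1
      _ ≤ 1 * p.β * 1 * 1 := mul_le_mul_of_nonneg_left hI'le1 (by positivity)
    linarith [s3]
  have hintS : ∀ u v : ℝ, IntervalIntegrable
      (fun s => bfun s * p.β * S' s * I' s) volume u v := by
    intro u v
    rw [intervalIntegrable_iff]
    apply MeasureTheory.Integrable.mono' (g := fun _ => p.β)
    · apply (MeasureTheory.integrableOn_const_iff).mpr
      right
      exact measure_Ioc_lt_top
    · exact (hfSmeas.aestronglyMeasurable).restrict
    · exact MeasureTheory.ae_of_all _ habs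
  have hintI : ∀ u v : ℝ, IntervalIntegrable
      (fun s => bfun s * p.β * S' s * I' s - p.γ * I' s) volume u v := by
    intro u v
    exact (hintS u v).sub ((continuous_const.mul hcontI').intervalIntegrable u v)
  have hSeq' : ∀ u v : ℝ, u ≤ v →
      S' v = S' u - ∫ s in u..v, bfun s * p.β * S' s * I' s := by
    intro u v huv
    have hftc := intervalIntegral.integral_eq_sub_of_hasDeriv_right_of_le huv
      (hcontS'.continuousOn) (fun x _ => hDS x) ((hintS u v).neg)
    rw [intervalIntegral.integral_neg] at hftc
    linarith
  have hIeq' : ∀ u v : ℝ, u ≤ v →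
      I' v = I' u + ∫ s in u..v, (bfun s * p.β * S' s * I' s - p.γ * I' s) := by
    intro u v huv
    have hftc := intervalIntegral.integral_eq_sub_of_hasDeriv_right_of_le huv
      (hcontI'.continuousOn) (fun x _ => hDI x) (hintI u v)
    linarith
  -- peak bound
  have hafltM : a < Mval p := by
    have h1 : hfun p p.Scrit < hfun p S0 :=
      hfun_strictMonoOn p self_mem_Ici (le_of_lt hS0crit) hS0crit
    simp only [Mval]
    linarith
  have hI'bound : ∀ t, I' t ≤ max a (Mval p - a * (1 - Real.exp (-(p.γ * τ)))) := by
    intro t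
    rcases le_or_gt t T with h | h
    · rw [(hS'pre t h).2]
      have hmono := (I1_strictMonoOn href htp).monotoneOn
      have h2 : I1 t ≤ I1 T := hmono (mem_Iic.mpr (by linarith)) (mem_Iic.mpr (by linarith)) h
      rw [← ha] at h2
      exact le_trans h2 (le_max_left _ _)
    · rcases le_or_gt t (T + τ) with h2 | h2
      · rw [hI'mid t (le_of_lt h) h2]
        have hexp1 : Real.exp (-(p.γ * (t - T))) ≤ 1 := by
          rw [Real.exp_le_one_iff]
          have := mul_pos p.hγ (sub_pos.mpr h)
          linarith
        have h3 : a * Real.exp (-(p.γ * (t - T))) ≤ a := by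
          nlinarith [Real.exp_pos (-(p.γ * (t - T)))]
        exact le_trans h3 (le_max_left _ _)
      · rw [hI'post t (by linarith)]
        have hge := hfun_ge p (hSfpos (t - (T + τ)))
        refine le_trans ?_ (le_max_right _ _)
        simp only [Mval]
        rw [hcval] at *
        linarith
  have hmaxlt : max a (Mval p - a * (1 - Real.exp (-(p.γ * τ)))) < Mval p := by
    apply max_lt hafltM
    have hpos : 0 < a * (1 - Real.exp (-(p.γ * τ))) := mul_pos hapos (by linarith)
    linarith
  have hImaxlt : Imax I' < Mval p := by
    apply lt_of_le_of_lt _ hmaxlt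
    apply csSup_le (Set.range_nonempty I')
    rintro y ⟨t, rfl⟩
    exact hI'bound t
  -- package
  refine ⟨⟨bfun, T, τ, hτ, ?_, ?_, ?_, ?_⟩, rfl, S', I', ⟨⟨fun t _ s _ => mem_univ s,
    hcontS'.continuousOn, hcontI'.continuousOn,
    fun t _ => (hS'val t).1, fun t _ => (hS'val t).2.1, fun t _ => (hS'val t).2.2.1,
    fun t _ => (hS'val t).2.2.2,
    fun t0 _ t _ hle => hSeq' t0 t hle, fun t0 _ t _ hle => hIeq' t0 t hle⟩,
    fun t ht => hS'pre t ht⟩, hImaxlt⟩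
  · intro t
    show (if T ≤ t ∧ t < T + τ then (0:ℝ) else 1) ∈ Set.Icc (0:ℝ) 1
    split_ifs <;> constructor <;> norm_num
  · intro t
    rcases lt_or_ge t T with h | h
    · have hev : bfun =ᶠ[𝓝[Ici t] t] (fun _ => (1:ℝ)) := by
        filter_upwards [mem_nhdsWithin_of_mem_nhds (Iio_mem_nhds h)] with y hy
        exact hbval_lt y hy
      exact (continuousWithinAt_const).congr_of_eventuallyEq hev (hbval_lt t h)
    · rcases lt_or_ge t (T + τ) with h2 | h2
      · have hev : bfun =ᶠ[𝓝[Ici t] t] (fun _ => (0:ℝ)) := by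
          filter_upwards [inter_mem self_mem_nhdsWithin
            (mem_nhdsWithin_of_mem_nhds (Iio_mem_nhds h2))] with y hy
          exact hbval_mid y (le_trans h hy.1) hy.2
        exact (continuousWithinAt_const).congr_of_eventuallyEq hev (hbval_mid t h h2)
      · have hev : bfun =ᶠ[𝓝[Ici t] t] (fun _ => (1:ℝ)) := by
          filter_upwards [self_mem_nhdsWithin] with y hy
          exact hbval_ge y (le_trans h2 hy)
        exact (continuousWithinAt_const).congr_of_eventuallyEq hev (hbval_ge t h2)
  · apply Set.Finite.subset (Set.toFinite {T, T + τ})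
    intro x hx
    simp only [mem_setOf_eq] at hx
    by_contra hxmem
    apply hx
    simp only [mem_insert_iff, mem_singleton_iff, not_or] at hxmem
    rcases lt_or_ge x T with h | h
    · apply ContinuousAt.congr continuousAt_const
      filter_upwards [Iio_mem_nhds h] with y hy
      exact (hbval_lt y hy).symm
    · have hT' : T < x := lt_of_le_of_ne h (Ne.symm hxmem.1)
      rcases lt_or_ge x (T + τ) with h2 | h2
      · apply ContinuousAt.congr continuousAt_const
        filter_upwards [Ioo_mem_nhds hT' h2] with y hy
        exact (hbval_mid y (le_of_lt hy.1) hy.2).symm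
      · have h3 : T + τ < x := lt_of_le_of_ne h2 (Ne.symm hxmem.2)
        apply ContinuousAt.congr continuousAt_const
        filter_upwards [Ioi_mem_nhds h3] with y hy
        exact (hbval_ge y (le_of_lt hy)).symm
  · intro t ht
    simp only [mem_Icc, not_and_or, not_le] at ht
    rcases ht with h | h
    · exact hbval_lt t h
    · exact hbval_ge t (le_of_lt h)

end DBL

/-- Don't be late: for an optimal intervention, the global peak
cannot occur strictly before the intervention begins, and `S(t_i) > Scrit`. -/
theorem dont_be_late (p : SIRParams) (S1 I1 : ℝ → ℝ)
    (href : IsReference p S1 I1)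
    (bs : Intervention p) (Sb Ib : ℝ → ℝ)
    (hopt : IsOptimal p S1 I1 bs Sb Ib) :
    (∀ t < bs.ti, Ib t < Imax Ib) ∧ p.Scrit < Sb bs.ti := by
  obtain ⟨hctrl, hoptim⟩ := hopt
  obtain ⟨htrajb, hcoin⟩ := hctrl
  obtain ⟨b0, hb0τ, S', I', hctrl', hlt⟩ := DBL.exists_better href (τ := bs.τ) bs.hτ
  have hstar : Imax Ib < DBL.Mval p :=
    lt_of_le_of_lt (hoptim b0 hb0τ S' I' hctrl') hlt
  obtain ⟨tp, htp⟩ := DBL.exists_tp href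
  have hbdd : BddAbove (Set.range Ib) := by
    refine ⟨1, ?_⟩
    rintro y ⟨t, rfl⟩
    exact DBL.traj_I_le_one htrajb t
  have hItp : I1 tp = DBL.Mval p := by
    have h5 := DBL.ref_energy href tp
    rw [htp] at h5
    simp only [DBL.Mval]
    linarith
  have htpgt : bs.ti < tp := by
    by_contra hcon
    push_neg at hcon
    have h1 : Ib tp = I1 tp := (hcoin tp hcon).2
    have h2 : Ib tp ≤ Imax Ib := le_csSup hbdd (Set.mem_range_self tp)
    rw [h1, hItp] at h2
    linarith
  constructor
  · intro t ht
    have h1 : Ib t = I1 t := (hcoin t (le_of_lt ht)).2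
    have h2 : I1 t < I1 bs.ti := DBL.I1_strictMonoOn href htp
      (Set.mem_Iic.mpr (by linarith)) (Set.mem_Iic.mpr (le_of_lt htpgt)) ht
    have h3 : I1 bs.ti = Ib bs.ti := ((hcoin bs.ti le_rfl).2).symm
    have h4 : Ib bs.ti ≤ Imax Ib := le_csSup hbdd (Set.mem_range_self _)
    rw [h1]
    linarith
  · have h1 : Sb bs.ti = S1 bs.ti := (hcoin bs.ti le_rfl).1
    have h2 : p.Scrit < S1 bs.ti := by
      rw [← htp]
      exact DBL.S1_strictAnti href htpgt
    rw [h1]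
    exact h2
end
end

section
/- (Peak early.) Let b* be an optimal intervention of duration τ that is a maintain–suppress intervention with start time t_i and maintenance fraction f ∈ [0,1]. If Imax(b*) = I_{b*}(t) for some t ∈ [t_i, t_i + τ], then Imax(b*) = I_{b*}(t_i). -/
noncomputable section

/-- Peak early: if the global peak of an optimal
maintain–suppress intervention occurs during the intervention, it occurs at the
start. -/
theorem peak_early (p : SIRParams) (S1 I1 : ℝ → ℝ)
    (href : IsReference p S1 I1)
    (bs : Intervention p) (Sb Ib : ℝ → ℝ) (f : ℝ)
    (hopt : IsOptimal p S1 I1 bs Sb Ib)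
    (hms : IsMaintainSuppress p bs f Sb)
    (t : ℝ) (ht : t ∈ Set.Icc bs.ti (bs.ti + bs.τ))
    (heq : Imax Ib = Ib t) :
    Imax Ib = Ib bs.ti := by
  obtain ⟨⟨htraj, hcoin⟩, hopt2⟩ := hopt
  obtain ⟨hf, hmaint, hsupp⟩ := hms
  obtain ⟨ht1, ht2⟩ := ht
  have hβ : (0:ℝ) < p.β := p.hγ.trans p.hβγ
  -- the integrand is nonpositive on [ti, t]
  have hint : ∀ s ∈ Set.Icc bs.ti t,
      bs.b s * p.β * Sb s * Ib s - p.γ * Ib s ≤ 0 := by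
    intro s hs
    rcases lt_or_ge s (bs.ti + f * bs.τ) with hc | hc
    · have hb := hmaint s ⟨hs.1, hc⟩
      have hSpos := htraj.Spos s (Set.mem_univ s)
      rw [hb]
      have : p.γ / (p.β * Sb s) * p.β * Sb s = p.γ := by
        field_simp
      rw [this]
      simp
    · have hb := hsupp s ⟨hc, hs.2.trans ht2⟩
      rw [hb]
      have hI := htraj.Inonneg s (Set.mem_univ s)
      nlinarith [p.hγ]
  have hIeq := htraj.I_eq bs.ti (Set.mem_univ _) t (Set.mem_univ _) ht1
  have hle : Ib t ≤ Ib bs.ti := by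
    have h0 : (∫ s in bs.ti..t, (bs.b s * p.β * Sb s * Ib s - p.γ * Ib s)) ≤ 0 := by
      have h1 : (0:ℝ) ≤ ∫ s in bs.ti..t, -(bs.b s * p.β * Sb s * Ib s - p.γ * Ib s) :=
        intervalIntegral.integral_nonneg ht1 (fun u hu => by linarith [hint u hu])
      rwa [intervalIntegral.integral_neg, Left.nonneg_neg_iff] at h1
    linarith [hIeq, h0]
  -- Ib ti ≤ Imax Ib
  have hbdd : BddAbove (Set.range Ib) := by
    refine ⟨1, ?_⟩
    rintro _ ⟨x, rfl⟩
    have h1 := htraj.sum_le_one x (Set.mem_univ x)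
    have h2 := htraj.Spos x (Set.mem_univ x)
    linarith
  have hge : Ib bs.ti ≤ Imax Ib := le_csSup hbdd ⟨bs.ti, rfl⟩
  have : Imax Ib ≤ Ib bs.ti := heq ▸ hle
  linarith
end
end
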